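/- arXiv:1803.06151 — 6 statements merged into one kernel-verified Lean document; each statement's English description precedes it below -/
import Mathlib

section
/- Let N ≥ 1 be an integer and λ > 0. If 0 < q ≤ N/(N+λ), then C_{N,λ,q} = 0; that is, for every ε > 0 there exists a nonnegative function ρ ∈ L^1 ∩ L^q(ℝ^N), ρ ≢ 0, such that I_λ[ρ] < ε (∫_{ℝ^N} ρ dx)^α (∫_{ℝ^N} ρ^q dx)^{(2−α)/q}. -/
open MeasureTheory ENNReal Filter Topology

noncomputable section

namespace RHLS

abbrev Space (N : ℕ) := EuclideanSpace ℝ (Fin N)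

/-- The interaction functional `I_λ[ρ] = ∬ ρ(x) |x-y|^λ ρ(y) dx dy`. -/
def I (N : ℕ) (lam : ℝ) (ρ : Space N → ℝ) : ℝ≥0∞ :=
  ∫⁻ x, ∫⁻ y, ENNReal.ofReal (ρ x) * ENNReal.ofReal (‖x - y‖ ^ lam) *
    ENNReal.ofReal (ρ y)

/-- `∫ ρ dx`. -/
def mass (N : ℕ) (ρ : Space N → ℝ) : ℝ≥0∞ := ∫⁻ x, ENNReal.ofReal (ρ x)

/-- `∫ ρ^q dx`. -/
def qnorm (N : ℕ) (q : ℝ) (ρ : Space N → ℝ) : ℝ≥0∞ :=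
  ∫⁻ x, ENNReal.ofReal (ρ x ^ q)

/-- `∫ |x|^λ ρ(x) dx`. -/
def mom (N : ℕ) (lam : ℝ) (ρ : Space N → ℝ) : ℝ≥0∞ :=
  ∫⁻ x, ENNReal.ofReal (‖x‖ ^ lam * ρ x)

/-- The exponent `α = (2N - q(2N+λ))/(N(1-q))`. -/
def alpha (N : ℕ) (lam q : ℝ) : ℝ :=
  (2 * (N : ℝ) - q * (2 * (N : ℝ) + lam)) / ((N : ℝ) * (1 - q))

/-- Admissible densities: measurable, nonnegative, in `L¹ ∩ L^q`, not a.e. zero. -/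
def Adm (N : ℕ) (q : ℝ) (ρ : Space N → ℝ) : Prop :=
  Measurable ρ ∧ 0 ≤ ρ ∧ mass N ρ < ⊤ ∧ qnorm N q ρ < ⊤ ∧
    ¬ ρ =ᵐ[(volume : Measure (Space N))] (0 : Space N → ℝ)

/-- The denominator `(∫ρ)^α (∫ρ^q)^{(2-α)/q}`. -/
def denom (N : ℕ) (lam q : ℝ) (ρ : Space N → ℝ) : ℝ≥0∞ :=
  mass N ρ ^ alpha N lam q * qnorm N q ρ ^ ((2 - alpha N lam q) / q)

/-- The quotient whose infimum is `C_{N,λ,q}`. -/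
def Qfun (N : ℕ) (lam q : ℝ) (ρ : Space N → ℝ) : ℝ≥0∞ :=
  I N lam ρ / denom N lam q ρ

/-- The optimal constant `C_{N,λ,q}`. -/
def C (N : ℕ) (lam q : ℝ) : ℝ≥0∞ :=
  sInf {c | ∃ ρ, Adm N q ρ ∧ c = Qfun N lam q ρ}

/-- The relaxed quotient `Q[ρ, M]`. -/
def Qrel (N : ℕ) (lam q : ℝ) (ρ : Space N → ℝ) (M : ℝ) : ℝ≥0∞ :=
  (I N lam ρ + 2 * ENNReal.ofReal M * mom N lam ρ) /
    ((mass N ρ + ENNReal.ofReal M) ^ alpha N lam q *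
      qnorm N q ρ ^ ((2 - alpha N lam q) / q))

/-- The relaxed optimal constant `C^rel_{N,λ,q}`. -/
def Crel (N : ℕ) (lam q : ℝ) : ℝ≥0∞ :=
  sInf {c | ∃ ρ M, Adm N q ρ ∧ 0 ≤ M ∧ c = Qrel N lam q ρ M}

/-- A minimizer `(ρ, M)` for the relaxed problem, with `I_λ[ρ]` and `∫|x|^λ ρ` finite. -/
def IsMinimizerRel (N : ℕ) (lam q : ℝ) (ρ : Space N → ℝ) (M : ℝ) : Prop :=
  Adm N q ρ ∧ 0 ≤ M ∧ I N lam ρ < ⊤ ∧ mom N lam ρ < ⊤ ∧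
    Qrel N lam q ρ M = Crel N lam q

/-- `ρ` is radially symmetric non-increasing. -/
def RadialNonincreasing (N : ℕ) (ρ : Space N → ℝ) : Prop :=
  ∃ φ : ℝ → ℝ, (∀ r s : ℝ, 0 ≤ r → r ≤ s → φ s ≤ φ r) ∧ ∀ x, ρ x = φ ‖x‖

end RHLS


open Metric

section Stmt2Aux

set_option maxHeartbeats 1000000 in
private lemma stmt2_aux (N : ℕ) (hN : 1 ≤ N) (lam q : ℝ) (hlam : 0 < lam)
    (hq0 : 0 < q) (hq : q ≤ (N : ℝ) / ((N : ℝ) + lam)) (eps : ℝ) (heps : 0 < eps) :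
    ∃ ρ : RHLS.Space N → ℝ, RHLS.Adm N q ρ ∧
      RHLS.I N lam ρ < ENNReal.ofReal eps * RHLS.denom N lam q ρ ∧
      RHLS.denom N lam q ρ ≠ 0 ∧ RHLS.denom N lam q ρ ≠ ⊤ := by
  haveI : Nonempty (Fin N) := ⟨⟨0, hN⟩⟩
  have hNR : (0:ℝ) < N := by exact_mod_cast Nat.pos_of_ne_zero (by omega)
  have hNlam : (0:ℝ) < (N:ℝ) + lam := by linarith
  have hq1 : q < 1 := lt_of_le_of_lt hq (by rw [div_lt_one hNlam]; linarith)
  have hqN : q * ((N:ℝ) + lam) ≤ N := (le_div_iff₀ hNlam).mp hq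
  set α := RHLS.alpha N lam q with hαdef
  have hden : (0:ℝ) < (N:ℝ) * (1 - q) := by nlinarith
  have hα0 : 0 ≤ α := by
    rw [hαdef]
    unfold RHLS.alpha
    apply div_nonneg _ hden.le
    nlinarith
  have h2α : 2 - α = q * lam / ((N:ℝ) * (1 - q)) := by
    rw [hαdef]
    unfold RHLS.alpha
    have h1q : (1:ℝ) - q ≠ 0 := by linarith
    field_simp
    ring
  set β := (2 - α) / q with hβdef
  have hβval : β = lam / ((N:ℝ) * (1 - q)) := by
    rw [hβdef, h2α]
    field_simp
  have hβ0 : 0 < β := by rw [hβval]; positivity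
  set p := (1 - q) * β with hpdef
  have hp0 : 0 < p := mul_pos (by linarith) hβ0
  -- the unit ball and its volume
  set S : Set (RHLS.Space N) := ball (0 : RHLS.Space N) 1 with hS
  have hSmeas : MeasurableSet S := measurableSet_ball
  set ω := volume S with hω
  have hω0 : 0 < ω := by rw [hω, hS]; exact measure_ball_pos _ _ one_pos
  have hωtop : ω < ⊤ := by rw [hω, hS]; exact measure_ball_lt_top
  have hvol : ∀ r : ℝ, 0 ≤ r → volume (ball (0 : RHLS.Space N) r)
      = ENNReal.ofReal (r ^ N) * ω := by
    intro r hr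
    rw [hω, hS, Measure.addHaar_ball _ _ hr, finrank_euclideanSpace_fin]
  -- constants
  set CI : ℝ≥0∞ := 2 * ENNReal.ofReal ((2:ℝ) ^ lam) *
      ((1 + ENNReal.ofReal ((2:ℝ) ^ (N:ℝ))) * ω) *
      ((1 + ENNReal.ofReal ((2:ℝ) ^ ((N:ℝ) + lam))) * ω) with hCI
  have hM1top : (1 + ENNReal.ofReal ((2:ℝ) ^ (N:ℝ))) * ω < ⊤ :=
    ENNReal.mul_lt_top (ENNReal.add_lt_top.mpr ⟨ENNReal.one_lt_top, ENNReal.ofReal_lt_top⟩) hωtop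
  have hJ1top : (1 + ENNReal.ofReal ((2:ℝ) ^ ((N:ℝ) + lam))) * ω < ⊤ :=
    ENNReal.mul_lt_top (ENNReal.add_lt_top.mpr ⟨ENNReal.one_lt_top, ENNReal.ofReal_lt_top⟩) hωtop
  have hCItop : CI ≠ ⊤ := by
    rw [hCI]
    exact ENNReal.mul_ne_top
      (ENNReal.mul_ne_top (ENNReal.mul_ne_top (by simp) ENNReal.ofReal_ne_top) hM1top.ne)
      hJ1top.ne
  set W : ℝ≥0∞ := ω ^ α * ω ^ β with hW
  have hW0 : W ≠ 0 := by
    rw [hW]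
    exact mul_ne_zero (ENNReal.rpow_pos hω0 hωtop.ne).ne' (ENNReal.rpow_pos hω0 hωtop.ne).ne'
  have hWtop : W ≠ ⊤ := by
    rw [hW]
    exact ENNReal.mul_ne_top (ENNReal.rpow_lt_top_of_nonneg hα0 hωtop.ne).ne
      (ENNReal.rpow_lt_top_of_nonneg hβ0.le hωtop.ne).ne
  set T : ℝ≥0∞ := ENNReal.ofReal eps * W with hT
  have hT0 : T ≠ 0 := by
    rw [hT]
    exact mul_ne_zero (ENNReal.ofReal_pos.mpr heps).ne' hW0
  have hTtop : T ≠ ⊤ := by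
    rw [hT]
    exact ENNReal.mul_ne_top ENNReal.ofReal_ne_top hWtop
  -- choice of K
  obtain ⟨K, hK1, hKD⟩ : ∃ K : ℕ, 1 ≤ K ∧ (CI / T).toReal < (K:ℝ) ^ p := by
    have h := (tendsto_rpow_atTop hp0).comp (tendsto_natCast_atTop_atTop (R := ℝ))
    have h2 := (h.eventually (eventually_gt_atTop ((CI / T).toReal))).and (eventually_ge_atTop 1)
    obtain ⟨K, h1, h2⟩ := h2.exists
    exact ⟨K, h2, h1⟩
  have hKbig : CI < T * ENNReal.ofReal ((K:ℝ) ^ p) := by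
    have hdivtop : CI / T ≠ ⊤ := (ENNReal.div_lt_top hCItop hT0).ne
    have h1 : CI / T < ENNReal.ofReal ((K:ℝ) ^ p) :=
      (ENNReal.lt_ofReal_iff_toReal_lt hdivtop).mpr hKD
    calc CI = T * (CI / T) := (ENNReal.mul_div_cancel hT0 hTtop).symm
      _ < T * ENNReal.ofReal ((K:ℝ) ^ p) := (ENNReal.mul_lt_mul_iff_right hT0 hTtop).mpr h1
  have hKR : (0:ℝ) < K := by exact_mod_cast hK1
  set e : ℝ := 1 / (K:ℝ) with he
  have he0 : 0 < e := by positivity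
  -- radii and heights
  set B : ℕ → ℝ := fun k => (2:ℝ) ^ (k:ℝ) with hB
  have hB0 : ∀ k, 0 < B k := fun k => Real.rpow_pos_of_pos two_pos _
  have hBr : ∀ (k : ℕ) (y : ℝ), (B k) ^ y = (2:ℝ) ^ ((k:ℝ) * y) := by
    intro k y
    simp only [hB]
    rw [← Real.rpow_mul (by norm_num)]
  have hB1 : ∀ k, 1 ≤ B k := by
    intro k
    simp only [hB]
    simpa using Real.rpow_le_rpow_of_exponent_le one_le_two (Nat.cast_nonneg k)
  have hBmono : ∀ {j k : ℕ}, j ≤ k → B j ≤ B k := by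
    intro j k hjk
    simp only [hB]
    exact Real.rpow_le_rpow_of_exponent_le one_le_two (by exact_mod_cast hjk)
  set h : ℕ → ℝ := fun k => e * (B k) ^ (-((N:ℝ) + lam)) with hh
  have hh0 : ∀ k, 0 < h k := fun k => mul_pos he0 (Real.rpow_pos_of_pos (hB0 k) _)
  set A : ℕ → Set (RHLS.Space N) := fun k =>
    ball (0 : RHLS.Space N) (B (k+1)) \ ball (0 : RHLS.Space N) (B k) with hA
  have hAmeas : ∀ k, MeasurableSet (A k) := fun k => measurableSet_ball.diff measurableSet_ball
  have hmemA : ∀ (k : ℕ) (x : RHLS.Space N), x ∈ A k ↔ B k ≤ ‖x‖ ∧ ‖x‖ < B (k+1) := by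
    intro k x
    simp only [hA, Set.mem_diff, mem_ball_zero_iff, not_lt]
    tauto
  have hSA : ∀ (k : ℕ) (x : RHLS.Space N), x ∈ S → x ∉ A k := by
    intro k x hxS hxA
    rw [hmemA] at hxA
    have h1 : ‖x‖ < 1 := by rw [hS] at hxS; exact mem_ball_zero_iff.mp hxS
    linarith [hxA.1, hB1 k]
  have hAA : ∀ {j k : ℕ} (x : RHLS.Space N), j ≠ k → x ∈ A j → x ∉ A k := by
    intro j k x hjk hxj hxk
    rw [hmemA] at hxj hxk
    rcases lt_or_gt_of_ne hjk with h' | h'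
    · have : B (j+1) ≤ B k := hBmono h'
      linarith [hxj.2, hxk.1]
    · have : B (k+1) ≤ B j := hBmono h'
      linarith [hxj.1, hxk.2]
  -- the density
  set ρ : RHLS.Space N → ℝ := fun x =>
      S.indicator (fun _ => (1:ℝ)) x + ∑ k ∈ Finset.range K, (A k).indicator (fun _ => h k) x
      with hρ
  have hρmeas : Measurable ρ := by
    apply Measurable.add
    · exact measurable_const.indicator hSmeas
    · exact Finset.measurable_sum _ fun k _ => measurable_const.indicator (hAmeas k)
  have hρS : ∀ x ∈ S, ρ x = 1 := by
    intro x hx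
    simp only [hρ]
    rw [Set.indicator_of_mem hx, Finset.sum_eq_zero, add_zero]
    intro k _
    exact Set.indicator_of_notMem (hSA k x hx) _
  have hρA : ∀ k, k < K → ∀ x ∈ A k, ρ x = h k := by
    intro k hk x hx
    simp only [hρ]
    rw [Set.indicator_of_notMem (fun hxS => hSA k x hxS hx), zero_add,
      Finset.sum_eq_single k
        (fun j _ hjk => Set.indicator_of_notMem (hAA x (Ne.symm hjk) hx) _)
        (fun hk' => absurd (Finset.mem_range.mpr hk) hk'),
      Set.indicator_of_mem hx]
  have hρzero : ∀ x, x ∉ S → (∀ k, k < K → x ∉ A k) → ρ x = 0 := by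
    intro x hxS hxA
    simp only [hρ]
    rw [Set.indicator_of_notMem hxS, zero_add]
    exact Finset.sum_eq_zero fun k hk =>
      Set.indicator_of_notMem (hxA k (Finset.mem_range.mp hk)) _
  have hρnn : 0 ≤ ρ := by
    intro x
    simp only [hρ]
    exact add_nonneg (Set.indicator_nonneg (fun _ _ => zero_le_one) x)
      (Finset.sum_nonneg fun k _ => Set.indicator_nonneg (fun _ _ => (hh0 k).le) x)
  -- decomposition of lintegrals of functions of ρ
  have hlint : ∀ (c0 : ℝ≥0∞) (c : ℕ → ℝ≥0∞),
      (∫⁻ x, (S.indicator (fun _ => c0) x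
        + ∑ k ∈ Finset.range K, (A k).indicator (fun _ => c k) x)) =
      c0 * ω + ∑ k ∈ Finset.range K, c k * volume (A k) := by
    intro c0 c
    rw [lintegral_add_left (measurable_const.indicator hSmeas),
      lintegral_finset_sum _ (fun k _ => measurable_const.indicator (hAmeas k)),
      lintegral_indicator_const hSmeas, ← hω]
    congr 1
    exact Finset.sum_congr rfl fun k _ => lintegral_indicator_const (hAmeas k) _
  have hpoint : ∀ (G : ℝ → ℝ≥0∞), G 0 = 0 → ∀ x, G (ρ x) =
      S.indicator (fun _ => G 1) x
        + ∑ k ∈ Finset.range K, (A k).indicator (fun _ => G (h k)) x := by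
    intro G hG0 x
    by_cases hxS : x ∈ S
    · rw [hρS x hxS, Set.indicator_of_mem hxS, Finset.sum_eq_zero, add_zero]
      intro k _
      exact Set.indicator_of_notMem (hSA k x hxS) _
    · by_cases hxA : ∃ k, k < K ∧ x ∈ A k
      · obtain ⟨k, hk, hxk⟩ := hxA
        rw [hρA k hk x hxk, Set.indicator_of_notMem hxS, zero_add,
          Finset.sum_eq_single k
            (fun j _ hjk => Set.indicator_of_notMem (hAA x (Ne.symm hjk) hxk) _)
            (fun hk' => absurd (Finset.mem_range.mpr hk) hk'),
          Set.indicator_of_mem hxk]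
      · push_neg at hxA
        rw [hρzero x hxS hxA, hG0, Set.indicator_of_notMem hxS, zero_add,
          Finset.sum_eq_zero]
        intro k hk
        exact Set.indicator_of_notMem (hxA k (Finset.mem_range.mp hk)) _
  have hdecomp : ∀ (G : ℝ → ℝ≥0∞), G 0 = 0 →
      (∫⁻ x, G (ρ x)) = G 1 * ω + ∑ k ∈ Finset.range K, G (h k) * volume (A k) := by
    intro G hG0
    rw [lintegral_congr (hpoint G hG0), hlint]
  -- volume bounds for annuli
  have hBpow : ∀ k : ℕ, (B k) ^ N = (2:ℝ) ^ ((k:ℝ) * N) := by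
    intro k
    rw [← Real.rpow_natCast (B k) N, hBr]
  have hcast : ∀ k : ℕ, (((k+1 : ℕ)) : ℝ) = (k:ℝ) + 1 := by
    intro k; push_cast; ring
  have hvolA_le : ∀ k : ℕ, volume (A k) ≤ ENNReal.ofReal ((2:ℝ) ^ (((k:ℝ)+1) * N)) * ω := by
    intro k
    calc volume (A k) ≤ volume (ball (0 : RHLS.Space N) (B (k+1))) := by
          rw [hA]; exact measure_mono Set.diff_subset
      _ = ENNReal.ofReal ((B (k+1)) ^ N) * ω := hvol _ (hB0 _).le
      _ = _ := by rw [hBpow, hcast]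
  have hvolA_ge : ∀ k : ℕ, ENNReal.ofReal ((2:ℝ) ^ ((k:ℝ) * N)) * ω ≤ volume (A k) := by
    intro k
    have hsub : ball (0 : RHLS.Space N) (B k) ⊆ ball (0 : RHLS.Space N) (B (k+1)) :=
      ball_subset_ball (hBmono (Nat.le_succ k))
    rw [hA]
    rw [measure_diff hsub measurableSet_ball.nullMeasurableSet measure_ball_lt_top.ne]
    apply ENNReal.le_sub_of_add_le_right measure_ball_lt_top.ne
    rw [hvol _ (hB0 _).le, hvol _ (hB0 _).le, hBpow, hBpow, hcast, ← add_mul,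
      ← ENNReal.ofReal_add (by positivity) (by positivity)]
    apply mul_le_mul_left
    apply ENNReal.ofReal_le_ofReal
    have h1 : (2:ℝ) ^ ((k:ℝ) * N) + (2:ℝ) ^ ((k:ℝ) * N) = (2:ℝ) ^ ((k:ℝ) * N + 1) := by
      rw [Real.rpow_add two_pos, Real.rpow_one]; ring
    rw [h1]
    apply Real.rpow_le_rpow_of_exponent_le one_le_two
    have hN1 : (1:ℝ) ≤ (N:ℝ) := by exact_mod_cast hN
    nlinarith [Nat.cast_nonneg (α := ℝ) k]
  -- key per-annulus real estimates
  have hhi : ∀ k : ℕ, h k * (2:ℝ) ^ (((k:ℝ)+1) * N) ≤ e * (2:ℝ) ^ (N:ℝ) := by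
    intro k
    simp only [hh]
    rw [hBr, mul_assoc, ← Real.rpow_add two_pos]
    apply mul_le_mul_of_nonneg_left _ he0.le
    apply Real.rpow_le_rpow_of_exponent_le one_le_two
    nlinarith [mul_nonneg (Nat.cast_nonneg (α := ℝ) k) hlam.le]
  have hhj : ∀ k : ℕ, (B (k+1)) ^ lam * h k * (2:ℝ) ^ (((k:ℝ)+1) * N)
      ≤ e * (2:ℝ) ^ ((N:ℝ) + lam) := by
    intro k
    simp only [hh]
    rw [hBr, hBr, hcast]
    have hkey : (2:ℝ) ^ (((k:ℝ)+1) * lam) * (e * (2:ℝ) ^ ((k:ℝ) * -((N:ℝ) + lam)))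
        * (2:ℝ) ^ (((k:ℝ)+1) * N)
        = e * ((2:ℝ) ^ (((k:ℝ)+1) * lam) * (2:ℝ) ^ ((k:ℝ) * -((N:ℝ) + lam))
            * (2:ℝ) ^ (((k:ℝ)+1) * N)) := by ring
    rw [hkey, ← Real.rpow_add two_pos, ← Real.rpow_add two_pos]
    apply mul_le_mul_of_nonneg_left _ he0.le
    apply le_of_eq
    congr 1
    ring
  have hhq : ∀ k : ℕ, e ^ q ≤ (h k) ^ q * (2:ℝ) ^ ((k:ℝ) * N) := by
    intro k
    simp only [hh]
    rw [Real.mul_rpow he0.le (Real.rpow_nonneg (hB0 k).le _),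
      ← Real.rpow_mul (hB0 k).le, hBr, mul_assoc, ← Real.rpow_add two_pos]
    have hE : 0 ≤ (k:ℝ) * (-((N:ℝ) + lam) * q) + (k:ℝ) * N := by
      have h1 : (k:ℝ) * (-((N:ℝ) + lam) * q) + (k:ℝ) * N
          = (k:ℝ) * ((N:ℝ) - q * ((N:ℝ) + lam)) := by ring
      rw [h1]
      exact mul_nonneg (Nat.cast_nonneg k) (by linarith)
    calc e ^ q = e ^ q * 1 := (mul_one _).symm
      _ ≤ e ^ q * (2:ℝ) ^ ((k:ℝ) * (-((N:ℝ) + lam) * q) + (k:ℝ) * N) :=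
          mul_le_mul_of_nonneg_left (Real.one_le_rpow one_le_two hE)
            (Real.rpow_nonneg he0.le q)
  -- mass
  have hmass : RHLS.mass N ρ = ω + ∑ k ∈ Finset.range K,
      ENNReal.ofReal (h k) * volume (A k) := by
    have h1 := hdecomp (fun t => ENNReal.ofReal t) ENNReal.ofReal_zero
    simp only [ENNReal.ofReal_one, one_mul] at h1
    exact h1
  have hmass_ge : ω ≤ RHLS.mass N ρ := by rw [hmass]; exact le_self_add
  have hmass_le : RHLS.mass N ρ ≤ (1 + ENNReal.ofReal ((2:ℝ) ^ (N:ℝ))) * ω := by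
    rw [hmass]
    have hterm : ∀ k ∈ Finset.range K, ENNReal.ofReal (h k) * volume (A k)
        ≤ ENNReal.ofReal (e * (2:ℝ) ^ (N:ℝ)) * ω := by
      intro k _
      calc ENNReal.ofReal (h k) * volume (A k)
          ≤ ENNReal.ofReal (h k) * (ENNReal.ofReal ((2:ℝ) ^ (((k:ℝ)+1) * N)) * ω) :=
            mul_le_mul_right (hvolA_le k) _
        _ = ENNReal.ofReal (h k * (2:ℝ) ^ (((k:ℝ)+1) * N)) * ω := by
            rw [← mul_assoc, ← ENNReal.ofReal_mul (hh0 k).le]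
        _ ≤ _ := mul_le_mul_left (ENNReal.ofReal_le_ofReal (hhi k)) _
    calc ω + ∑ k ∈ Finset.range K, ENNReal.ofReal (h k) * volume (A k)
        ≤ ω + ∑ _k ∈ Finset.range K, ENNReal.ofReal (e * (2:ℝ) ^ (N:ℝ)) * ω :=
          add_le_add_right (Finset.sum_le_sum hterm) _
      _ = (1 + ENNReal.ofReal ((2:ℝ) ^ (N:ℝ))) * ω := by
          rw [Finset.sum_const, Finset.card_range, nsmul_eq_mul, ← mul_assoc,
            ← ENNReal.ofReal_natCast K, ← ENNReal.ofReal_mul (Nat.cast_nonneg K)]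
          have hKe : (K:ℝ) * (e * (2:ℝ) ^ (N:ℝ)) = (2:ℝ) ^ (N:ℝ) := by
            rw [he]; field_simp
          rw [hKe, add_mul, one_mul]
  have hmass_top : RHLS.mass N ρ < ⊤ := hmass_le.trans_lt hM1top
  -- qnorm
  have hqnorm : RHLS.qnorm N q ρ = ω + ∑ k ∈ Finset.range K,
      ENNReal.ofReal ((h k) ^ q) * volume (A k) := by
    have h1 := hdecomp (fun t => ENNReal.ofReal (t ^ q))
      (by show ENNReal.ofReal ((0:ℝ) ^ q) = 0
          rw [Real.zero_rpow hq0.ne', ENNReal.ofReal_zero])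
    simp only [Real.one_rpow, ENNReal.ofReal_one, one_mul] at h1
    exact h1
  have hqnorm_ge : ENNReal.ofReal ((K:ℝ) ^ (1 - q)) * ω ≤ RHLS.qnorm N q ρ := by
    rw [hqnorm]
    have hterm : ∀ k ∈ Finset.range K, ENNReal.ofReal (e ^ q) * ω
        ≤ ENNReal.ofReal ((h k) ^ q) * volume (A k) := by
      intro k _
      calc ENNReal.ofReal (e ^ q) * ω
          ≤ ENNReal.ofReal ((h k) ^ q * (2:ℝ) ^ ((k:ℝ) * N)) * ω :=
            mul_le_mul_left (ENNReal.ofReal_le_ofReal (hhq k)) _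
        _ = ENNReal.ofReal ((h k) ^ q) * (ENNReal.ofReal ((2:ℝ) ^ ((k:ℝ) * N)) * ω) := by
            rw [ENNReal.ofReal_mul (Real.rpow_nonneg (hh0 k).le q), mul_assoc]
        _ ≤ _ := mul_le_mul_right (hvolA_ge k) _
    calc ENNReal.ofReal ((K:ℝ) ^ (1 - q)) * ω
        = ∑ _k ∈ Finset.range K, ENNReal.ofReal (e ^ q) * ω := by
          rw [Finset.sum_const, Finset.card_range, nsmul_eq_mul, ← mul_assoc,
            ← ENNReal.ofReal_natCast K, ← ENNReal.ofReal_mul (Nat.cast_nonneg K)]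
          congr 2
          rw [he, Real.div_rpow zero_le_one hKR.le, Real.one_rpow, Real.rpow_sub hKR,
            Real.rpow_one, mul_one_div]
      _ ≤ ∑ k ∈ Finset.range K, ENNReal.ofReal ((h k) ^ q) * volume (A k) :=
          Finset.sum_le_sum hterm
      _ ≤ _ := le_add_self
  have hqnorm_top : RHLS.qnorm N q ρ < ⊤ := by
    rw [hqnorm]
    refine ENNReal.add_lt_top.mpr ⟨hωtop, ?_⟩
    refine ENNReal.sum_lt_top.mpr fun k _ => ?_
    exact ENNReal.mul_lt_top ENNReal.ofReal_lt_top
      ((hvolA_le k).trans_lt (ENNReal.mul_lt_top ENNReal.ofReal_lt_top hωtop))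
  -- not a.e. zero
  have hρne : ¬ ρ =ᵐ[(volume : Measure (RHLS.Space N))] (0 : RHLS.Space N → ℝ) := by
    intro hcontra
    have h1 : volume {x : RHLS.Space N | ρ x ≠ 0} = 0 := by
      simpa [Filter.EventuallyEq, ae_iff] using hcontra
    have h2 : S ⊆ {x : RHLS.Space N | ρ x ≠ 0} := by
      intro x hx
      simp only [Set.mem_setOf_eq, hρS x hx]
      norm_num
    have h3 : ω ≤ 0 := h1 ▸ (hω ▸ measure_mono h2)
    exact absurd (le_antisymm h3 zero_le) hω0.ne'
  -- moment bound
  have hmompt : ∀ x : RHLS.Space N, ENNReal.ofReal (‖x‖ ^ lam * ρ x) ≤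
      S.indicator (fun _ => (1:ℝ≥0∞)) x + ∑ k ∈ Finset.range K,
        (A k).indicator (fun _ => ENNReal.ofReal ((B (k+1)) ^ lam * h k)) x := by
    intro x
    by_cases hxS : x ∈ S
    · have hb : ‖x‖ ^ lam * ρ x ≤ 1 := by
        rw [hρS x hxS, mul_one]
        have : ‖x‖ < 1 := by rw [hS] at hxS; exact mem_ball_zero_iff.mp hxS
        exact Real.rpow_le_one (norm_nonneg x) this.le hlam.le
      calc ENNReal.ofReal (‖x‖ ^ lam * ρ x) ≤ 1 :=
            (ENNReal.ofReal_le_ofReal hb).trans_eq ENNReal.ofReal_one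
        _ = S.indicator (fun _ => (1:ℝ≥0∞)) x := by rw [Set.indicator_of_mem hxS]
        _ ≤ _ := le_self_add
    · by_cases hxA : ∃ k, k < K ∧ x ∈ A k
      · obtain ⟨k, hk, hxk⟩ := hxA
        have hb : ‖x‖ ^ lam * ρ x ≤ (B (k+1)) ^ lam * h k := by
          rw [hρA k hk x hxk]
          apply mul_le_mul_of_nonneg_right _ (hh0 k).le
          exact Real.rpow_le_rpow (norm_nonneg x) ((hmemA k x).mp hxk).2.le hlam.le
        calc ENNReal.ofReal (‖x‖ ^ lam * ρ x)
            ≤ ENNReal.ofReal ((B (k+1)) ^ lam * h k) := ENNReal.ofReal_le_ofReal hb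
          _ = (A k).indicator (fun _ => ENNReal.ofReal ((B (k+1)) ^ lam * h k)) x := by
              rw [Set.indicator_of_mem hxk]
          _ ≤ ∑ j ∈ Finset.range K,
              (A j).indicator (fun _ => ENNReal.ofReal ((B (j+1)) ^ lam * h j)) x :=
              Finset.single_le_sum
                (f := fun j => (A j).indicator
                  (fun _ => ENNReal.ofReal ((B (j+1)) ^ lam * h j)) x)
                (fun j _ => zero_le) (Finset.mem_range.mpr hk)
          _ ≤ _ := le_add_self
      · push_neg at hxA
        rw [hρzero x hxS hxA, mul_zero, ENNReal.ofReal_zero]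
        exact zero_le
  have hmom_le : RHLS.mom N lam ρ ≤ (1 + ENNReal.ofReal ((2:ℝ) ^ ((N:ℝ) + lam))) * ω := by
    have hstep : RHLS.mom N lam ρ ≤ 1 * ω + ∑ k ∈ Finset.range K,
        ENNReal.ofReal ((B (k+1)) ^ lam * h k) * volume (A k) := by
      rw [← hlint 1 (fun k => ENNReal.ofReal ((B (k+1)) ^ lam * h k))]
      exact lintegral_mono hmompt
    have hterm : ∀ k ∈ Finset.range K, ENNReal.ofReal ((B (k+1)) ^ lam * h k) * volume (A k)
        ≤ ENNReal.ofReal (e * (2:ℝ) ^ ((N:ℝ) + lam)) * ω := by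
      intro k _
      have hnn : 0 ≤ (B (k+1)) ^ lam * h k :=
        mul_nonneg (Real.rpow_nonneg (hB0 _).le _) (hh0 k).le
      calc ENNReal.ofReal ((B (k+1)) ^ lam * h k) * volume (A k)
          ≤ ENNReal.ofReal ((B (k+1)) ^ lam * h k)
              * (ENNReal.ofReal ((2:ℝ) ^ (((k:ℝ)+1) * N)) * ω) :=
            mul_le_mul_right (hvolA_le k) _
        _ = ENNReal.ofReal ((B (k+1)) ^ lam * h k * (2:ℝ) ^ (((k:ℝ)+1) * N)) * ω := by
            rw [← mul_assoc, ← ENNReal.ofReal_mul hnn]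
        _ ≤ _ := mul_le_mul_left (ENNReal.ofReal_le_ofReal (hhj k)) _
    calc RHLS.mom N lam ρ ≤ 1 * ω + ∑ k ∈ Finset.range K,
          ENNReal.ofReal ((B (k+1)) ^ lam * h k) * volume (A k) := hstep
      _ ≤ 1 * ω + ∑ _k ∈ Finset.range K,
          ENNReal.ofReal (e * (2:ℝ) ^ ((N:ℝ) + lam)) * ω :=
          add_le_add_right (Finset.sum_le_sum hterm) _
      _ = (1 + ENNReal.ofReal ((2:ℝ) ^ ((N:ℝ) + lam))) * ω := by
          rw [Finset.sum_const, Finset.card_range, nsmul_eq_mul, ← mul_assoc,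
            ← ENNReal.ofReal_natCast K, ← ENNReal.ofReal_mul (Nat.cast_nonneg K)]
          have hKe : (K:ℝ) * (e * (2:ℝ) ^ ((N:ℝ) + lam)) = (2:ℝ) ^ ((N:ℝ) + lam) := by
            rw [he]; field_simp
          rw [hKe, add_mul, one_mul]
  -- interaction bound
  have hfm : Measurable fun x : RHLS.Space N => ENNReal.ofReal (ρ x) := hρmeas.ennreal_ofReal
  have ham : Measurable fun x : RHLS.Space N => ENNReal.ofReal (‖x‖ ^ lam) :=
    (((Real.continuous_rpow_const hlam.le).comp continuous_norm).measurable).ennreal_ofReal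
  have hafm : Measurable fun y : RHLS.Space N =>
      ENNReal.ofReal (‖y‖ ^ lam) * ENNReal.ofReal (ρ y) := ham.mul hfm
  have hmom_eq : RHLS.mom N lam ρ
      = ∫⁻ y, ENNReal.ofReal (‖y‖ ^ lam) * ENNReal.ofReal (ρ y) :=
    lintegral_congr fun y => ENNReal.ofReal_mul (Real.rpow_nonneg (norm_nonneg y) lam)
  have hIbound : RHLS.I N lam ρ
      ≤ 2 * ENNReal.ofReal ((2:ℝ) ^ lam) * RHLS.mass N ρ * RHLS.mom N lam ρ := by
    have hwpt : ∀ x y : RHLS.Space N, ENNReal.ofReal (‖x - y‖ ^ lam) ≤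
        ENNReal.ofReal ((2:ℝ) ^ lam)
          * (ENNReal.ofReal (‖x‖ ^ lam) + ENNReal.ofReal (‖y‖ ^ lam)) := by
      intro x y
      have h3 : ‖x - y‖ ^ lam ≤ (2:ℝ) ^ lam * (‖x‖ ^ lam + ‖y‖ ^ lam) := by
        have h1 : ‖x - y‖ ^ lam ≤ (2 * max ‖x‖ ‖y‖) ^ lam := by
          apply Real.rpow_le_rpow (norm_nonneg _) _ hlam.le
          calc ‖x - y‖ ≤ ‖x‖ + ‖y‖ := norm_sub_le x y
            _ ≤ 2 * max ‖x‖ ‖y‖ := by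
                rcases le_total ‖x‖ ‖y‖ with hc | hc
                · rw [max_eq_right hc]; linarith
                · rw [max_eq_left hc]; linarith
        have h2 : (2 * max ‖x‖ ‖y‖) ^ lam = (2:ℝ) ^ lam * (max ‖x‖ ‖y‖) ^ lam :=
          Real.mul_rpow (by norm_num) (le_max_of_le_left (norm_nonneg x))
        have h4 : (max ‖x‖ ‖y‖) ^ lam ≤ ‖x‖ ^ lam + ‖y‖ ^ lam := by
          rcases max_cases ‖x‖ ‖y‖ with ⟨hm, _⟩ | ⟨hm, _⟩ <;> rw [hm]
          · linarith [Real.rpow_nonneg (norm_nonneg y) lam]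
          · linarith [Real.rpow_nonneg (norm_nonneg x) lam]
        calc ‖x - y‖ ^ lam ≤ (2:ℝ) ^ lam * (max ‖x‖ ‖y‖) ^ lam := h2 ▸ h1
          _ ≤ (2:ℝ) ^ lam * (‖x‖ ^ lam + ‖y‖ ^ lam) :=
              mul_le_mul_of_nonneg_left h4 (Real.rpow_nonneg (by norm_num) lam)
      calc ENNReal.ofReal (‖x - y‖ ^ lam)
          ≤ ENNReal.ofReal ((2:ℝ) ^ lam * (‖x‖ ^ lam + ‖y‖ ^ lam)) :=
            ENNReal.ofReal_le_ofReal h3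
        _ = _ := by
            rw [ENNReal.ofReal_mul (Real.rpow_nonneg (by norm_num) lam),
              ENNReal.ofReal_add (Real.rpow_nonneg (norm_nonneg x) lam)
                (Real.rpow_nonneg (norm_nonneg y) lam)]
    calc RHLS.I N lam ρ
        ≤ ∫⁻ x, ∫⁻ y, (ENNReal.ofReal ((2:ℝ) ^ lam) * ENNReal.ofReal (ρ x)) *
            (ENNReal.ofReal (‖x‖ ^ lam) * ENNReal.ofReal (ρ y)
              + ENNReal.ofReal (‖y‖ ^ lam) * ENNReal.ofReal (ρ y)) := by
          apply lintegral_mono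
          intro x
          apply lintegral_mono
          intro y
          calc ENNReal.ofReal (ρ x) * ENNReal.ofReal (‖x - y‖ ^ lam) * ENNReal.ofReal (ρ y)
              ≤ ENNReal.ofReal (ρ x) * (ENNReal.ofReal ((2:ℝ) ^ lam) *
                  (ENNReal.ofReal (‖x‖ ^ lam) + ENNReal.ofReal (‖y‖ ^ lam)))
                  * ENNReal.ofReal (ρ y) :=
                mul_le_mul_left (mul_le_mul_right (hwpt x y) _) _
            _ = _ := by ring
      _ = ∫⁻ x, (ENNReal.ofReal ((2:ℝ) ^ lam) * ENNReal.ofReal (ρ x)) *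
            (ENNReal.ofReal (‖x‖ ^ lam) * RHLS.mass N ρ + RHLS.mom N lam ρ) := by
          apply lintegral_congr
          intro x
          rw [lintegral_const_mul _ (show Measurable fun y => ENNReal.ofReal (‖x‖ ^ lam) * ENNReal.ofReal (ρ y) + ENNReal.ofReal (‖y‖ ^ lam) * ENNReal.ofReal (ρ y) from (hfm.const_mul _).add hafm),
            lintegral_add_left (hfm.const_mul _),
            lintegral_const_mul _ hfm, ← hmom_eq]
          rfl
      _ = 2 * ENNReal.ofReal ((2:ℝ) ^ lam) * RHLS.mass N ρ * RHLS.mom N lam ρ := by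
          have hexp : ∀ x : RHLS.Space N,
              (ENNReal.ofReal ((2:ℝ) ^ lam) * ENNReal.ofReal (ρ x)) *
                (ENNReal.ofReal (‖x‖ ^ lam) * RHLS.mass N ρ + RHLS.mom N lam ρ)
              = ENNReal.ofReal ((2:ℝ) ^ lam) *
                ((ENNReal.ofReal (‖x‖ ^ lam) * ENNReal.ofReal (ρ x)) * RHLS.mass N ρ
                  + ENNReal.ofReal (ρ x) * RHLS.mom N lam ρ) := fun x => by ring
          rw [lintegral_congr hexp,
            lintegral_const_mul _ (show Measurable fun x => ENNReal.ofReal (‖x‖ ^ lam) * ENNReal.ofReal (ρ x) * RHLS.mass N ρ + ENNReal.ofReal (ρ x) * RHLS.mom N lam ρ from (hafm.mul_const _).add (hfm.mul_const _)),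
            lintegral_add_left (hafm.mul_const _),
            lintegral_mul_const _ hafm, lintegral_mul_const _ hfm, ← hmom_eq]
          have hmm : (∫⁻ x, ENNReal.ofReal (ρ x)) = RHLS.mass N ρ := rfl
          rw [hmm]
          ring
  have hICI : RHLS.I N lam ρ ≤ CI := by
    rw [hCI]
    calc RHLS.I N lam ρ
        ≤ 2 * ENNReal.ofReal ((2:ℝ) ^ lam) * RHLS.mass N ρ * RHLS.mom N lam ρ := hIbound
      _ ≤ _ := mul_le_mul' (mul_le_mul' le_rfl hmass_le) hmom_le
  -- denominator bounds
  have hdform : RHLS.denom N lam q ρ = RHLS.mass N ρ ^ α * RHLS.qnorm N q ρ ^ β := by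
    unfold RHLS.denom
    rw [← hαdef, ← hβdef]
  have hdenom_ge : ENNReal.ofReal ((K:ℝ) ^ p) * W ≤ RHLS.denom N lam q ρ := by
    have h1 : ω ^ α ≤ RHLS.mass N ρ ^ α := ENNReal.rpow_le_rpow hmass_ge hα0
    have h2 : (ENNReal.ofReal ((K:ℝ) ^ (1 - q)) * ω) ^ β ≤ RHLS.qnorm N q ρ ^ β :=
      ENNReal.rpow_le_rpow hqnorm_ge hβ0.le
    have h3 : (ENNReal.ofReal ((K:ℝ) ^ (1 - q)) * ω) ^ β
        = ENNReal.ofReal ((K:ℝ) ^ p) * ω ^ β := by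
      rw [ENNReal.mul_rpow_of_nonneg _ _ hβ0.le,
        ENNReal.ofReal_rpow_of_pos (Real.rpow_pos_of_pos hKR _), ← Real.rpow_mul hKR.le,
        ← hpdef]
    rw [hdform, hW]
    calc ENNReal.ofReal ((K:ℝ) ^ p) * (ω ^ α * ω ^ β)
        = ω ^ α * (ENNReal.ofReal ((K:ℝ) ^ p) * ω ^ β) := by ring
      _ ≤ RHLS.mass N ρ ^ α * RHLS.qnorm N q ρ ^ β := mul_le_mul' h1 (h3 ▸ h2)
  have hd0 : RHLS.denom N lam q ρ ≠ 0 := by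
    have hpos : (0:ℝ≥0∞) < ENNReal.ofReal ((K:ℝ) ^ p) * W :=
      ENNReal.mul_pos (ENNReal.ofReal_pos.mpr (Real.rpow_pos_of_pos hKR p)).ne' hW0
    exact (hpos.trans_le hdenom_ge).ne'
  have hdt : RHLS.denom N lam q ρ ≠ ⊤ := by
    rw [hdform]
    exact ENNReal.mul_ne_top (ENNReal.rpow_lt_top_of_nonneg hα0 hmass_top.ne).ne
      (ENNReal.rpow_lt_top_of_nonneg hβ0.le hqnorm_top.ne).ne
  have hmain : RHLS.I N lam ρ < ENNReal.ofReal eps * RHLS.denom N lam q ρ := by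
    calc RHLS.I N lam ρ ≤ CI := hICI
      _ < T * ENNReal.ofReal ((K:ℝ) ^ p) := hKbig
      _ = ENNReal.ofReal eps * (ENNReal.ofReal ((K:ℝ) ^ p) * W) := by rw [hT]; ring
      _ ≤ ENNReal.ofReal eps * RHLS.denom N lam q ρ := mul_le_mul_right hdenom_ge _
  exact ⟨ρ, ⟨hρmeas, hρnn, hmass_top, hqnorm_top, hρne⟩, hmain, hd0, hdt⟩

end Stmt2Aux

/-- if `0 < q ≤ N/(N+λ)`, then `C_{N,λ,q} = 0`; that is, for every `ε > 0`
there is an admissible `ρ` with `I_λ[ρ] < ε (∫ρ)^α (∫ρ^q)^{(2-α)/q}`. -/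
theorem stmt2 (N : ℕ) (hN : 1 ≤ N) (lam q : ℝ) (hlam : 0 < lam)
    (hq0 : 0 < q) (hq : q ≤ (N : ℝ) / ((N : ℝ) + lam)) :
    RHLS.C N lam q = 0 ∧
    ∀ ε : ℝ, 0 < ε → ∃ ρ : RHLS.Space N → ℝ, RHLS.Adm N q ρ ∧
      RHLS.I N lam ρ < ENNReal.ofReal ε * RHLS.denom N lam q ρ := by
  have key := stmt2_aux N hN lam q hlam hq0 hq
  constructor
  · by_contra hC
    obtain ⟨eps, heps, hle⟩ : ∃ eps : ℝ, 0 < eps ∧ ENNReal.ofReal eps ≤ RHLS.C N lam q := by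
      rcases eq_or_ne (RHLS.C N lam q) ⊤ with hTt | hTt
      · exact ⟨1, one_pos, by rw [hTt]; exact le_top⟩
      · exact ⟨(RHLS.C N lam q).toReal, ENNReal.toReal_pos hC hTt,
          by rw [ENNReal.ofReal_toReal hTt]⟩
    obtain ⟨ρ, hAdm, hlt, hd0, hdt⟩ := key eps heps
    have hQ : RHLS.Qfun N lam q ρ < ENNReal.ofReal eps := by
      unfold RHLS.Qfun
      exact (ENNReal.div_lt_iff (Or.inl hd0) (Or.inl hdt)).mpr hlt
    have hmem : RHLS.Qfun N lam q ρ ∈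
        {c | ∃ ρ', RHLS.Adm N q ρ' ∧ c = RHLS.Qfun N lam q ρ'} := ⟨ρ, hAdm, rfl⟩
    have hsle : RHLS.C N lam q ≤ RHLS.Qfun N lam q ρ := sInf_le hmem
    exact absurd (lt_of_le_of_lt hsle (lt_of_lt_of_le hQ hle)) (lt_irrefl _)
  · intro eps heps
    obtain ⟨ρ, hAdm, hlt, _, _⟩ := key eps heps
    exact ⟨ρ, hAdm, hlt⟩
end
end

section
/- Let N ≥ 1 be an integer and λ > 0. If N/(N+λ) < q < 1, then C_{N,λ,q} > 0; that is, there exists a constant C > 0 such that I_λ[ρ] ≥ C (∫_{ℝ^N} ρ dx)^α (∫_{ℝ^N} ρ^q dx)^{(2−α)/q} for all nonnegative ρ ∈ L^1 ∩ L^q(ℝ^N). -/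
open MeasureTheory ENNReal Filter Topology

noncomputable section

namespace RHLS

open Metric

lemma nontrivial_space {N : ℕ} (hN : 1 ≤ N) : Nontrivial (Space N) := by
  apply Module.nontrivial_of_finrank_pos (R := ℝ)
  rw [finrank_euclideanSpace_fin]; omega

/-- Weight integral bound: `∫_{‖y-x‖ ≥ r} ‖y-x‖^(-s) ≤ r^(N-s) * Cg` for `s > N`. -/
lemma weight_bound {N : ℕ} (hN : 1 ≤ N) {s : ℝ} (hs : (N : ℝ) < s) :
    ∃ Cg : ℝ≥0∞, Cg ≠ ∞ ∧ ∀ (x : Space N) (r : ℝ), 0 < r →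
      (∫⁻ y in {y : Space N | r ≤ ‖y - x‖}, ENNReal.ofReal (‖y - x‖ ^ (-s))) ≤
        ENNReal.ofReal (r ^ ((N : ℝ) - s)) * Cg := by
  haveI := nontrivial_space hN
  set v : ℝ≥0∞ := volume (ball (0 : Space N) 1) with hv
  have hvlt : v ≠ ∞ := measure_ball_lt_top.ne
  have hgeo : ENNReal.ofReal ((2:ℝ) ^ ((N:ℝ) - s)) < 1 := by
    rw [← ENNReal.ofReal_one]
    exact ENNReal.ofReal_lt_ofReal_iff_of_nonneg (by positivity) |>.mpr
      (Real.rpow_lt_one_of_one_lt_of_neg one_lt_two (by linarith))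
  refine ⟨ENNReal.ofReal ((2:ℝ) ^ (N:ℝ)) * v *
      (1 - ENNReal.ofReal ((2:ℝ) ^ ((N:ℝ) - s)))⁻¹, ?_, ?_⟩
  · apply ENNReal.mul_ne_top (ENNReal.mul_ne_top ENNReal.ofReal_ne_top hvlt)
    rw [ENNReal.inv_ne_top]
    exact (tsub_pos_of_lt hgeo).ne'
  intro x r hr
  set A : ℕ → Set (Space N) := fun k => ball x (r * 2 ^ (k+1)) \ ball x (r * 2 ^ k) with hA
  have hsub : {y : Space N | r ≤ ‖y - x‖} ⊆ ⋃ k, A k := by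
    intro y hy
    simp only [Set.mem_setOf_eq] at hy
    have hyx : (0:ℝ) < ‖y - x‖ := lt_of_lt_of_le hr hy
    set t : ℝ := ‖y - x‖ / r with ht
    have ht1 : (1:ℝ) ≤ t := (one_le_div hr).mpr hy
    set k : ℕ := Nat.log 2 ⌊t⌋₊ with hk
    have hfl1 : 1 ≤ ⌊t⌋₊ := (Nat.one_le_floor_iff t).mpr ht1
    have h1 : (2:ℝ) ^ k ≤ t := by
      calc ((2:ℝ) ^ k) = ((2 ^ k : ℕ) : ℝ) := by push_cast; ring
        _ ≤ (⌊t⌋₊ : ℝ) := by exact_mod_cast Nat.cast_le.mpr (Nat.pow_log_le_self 2 (by omega))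
        _ ≤ t := Nat.floor_le (by linarith)
    have h2 : t < (2:ℝ) ^ (k+1) := by
      have := Nat.lt_pow_succ_log_self (by norm_num : 1 < 2) ⌊t⌋₊
      calc t < (⌊t⌋₊ : ℝ) + 1 := Nat.lt_floor_add_one t
        _ ≤ ((2 ^ (k+1) : ℕ) : ℝ) := by exact_mod_cast Nat.succ_le_of_lt this
        _ = (2:ℝ) ^ (k+1) := by push_cast; ring
    refine Set.mem_iUnion.mpr ⟨k, ?_, ?_⟩
    · simp only [mem_ball, dist_eq_norm]
      calc ‖y - x‖ = t * r := by rw [ht]; field_simp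
        _ < 2 ^ (k+1) * r := by nlinarith
        _ = r * 2 ^ (k+1) := by ring
    · simp only [mem_ball, dist_eq_norm, not_lt]
      calc r * 2 ^ k ≤ r * t := by nlinarith
        _ = ‖y - x‖ := by rw [ht]; field_simp
  have key : ∀ k : ℕ, (r * 2 ^ k) ^ (-s) * (r * 2 ^ (k+1)) ^ (N:ℕ) =
      r ^ ((N:ℝ) - s) * (2:ℝ) ^ (N:ℝ) * ((2:ℝ) ^ ((N:ℝ) - s)) ^ k := by
    intro k
    have hL : (0:ℝ) < (r * 2 ^ k) ^ (-s) * (r * 2 ^ (k+1)) ^ (N:ℕ) := by positivity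
    have hR : (0:ℝ) < r ^ ((N:ℝ) - s) * (2:ℝ) ^ (N:ℝ) * ((2:ℝ) ^ ((N:ℝ) - s)) ^ k := by
      positivity
    refine Real.log_injOn_pos (Set.mem_Ioi.mpr hL) (Set.mem_Ioi.mpr hR) ?_
    have e1 : Real.log ((r * 2 ^ k) ^ (-s)) = -s * (Real.log r + k * Real.log 2) := by
      rw [Real.log_rpow (by positivity), Real.log_mul hr.ne' (by positivity), Real.log_pow]
    have e2 : Real.log ((r * 2 ^ (k+1)) ^ (N:ℕ)) =
        (N:ℝ) * (Real.log r + ((k:ℝ)+1) * Real.log 2) := by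
      rw [Real.log_pow, Real.log_mul hr.ne' (by positivity), Real.log_pow]
      push_cast; ring
    have e3 : Real.log (((2:ℝ) ^ ((N:ℝ) - s)) ^ k) = (k:ℝ) * (((N:ℝ) - s) * Real.log 2) := by
      rw [Real.log_pow, Real.log_rpow two_pos]
    rw [Real.log_mul (by positivity) (by positivity),
      Real.log_mul (by positivity) (by positivity),
      Real.log_mul (by positivity) (by positivity),
      e1, e2, e3, Real.log_rpow hr, Real.log_rpow two_pos]
    ring
  have hmono : (∫⁻ y in {y : Space N | r ≤ ‖y - x‖}, ENNReal.ofReal (‖y - x‖ ^ (-s)))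
      ≤ ∑' k, ∫⁻ y in A k, ENNReal.ofReal (‖y - x‖ ^ (-s)) :=
    (lintegral_mono_set hsub).trans (lintegral_iUnion_le _ _)
  have hAk : ∀ k : ℕ, (∫⁻ y in A k, ENNReal.ofReal (‖y - x‖ ^ (-s))) ≤
      ENNReal.ofReal (r ^ ((N:ℝ) - s) * (2:ℝ) ^ (N:ℝ)) *
        ENNReal.ofReal ((2:ℝ) ^ ((N:ℝ) - s)) ^ k * v := by
    intro k
    have hball : volume (A k) ≤ ENNReal.ofReal ((r * 2 ^ (k+1)) ^ (N:ℕ)) * v := by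
      calc volume (A k) ≤ volume (ball x (r * 2 ^ (k+1))) :=
            measure_mono Set.diff_subset
        _ = ENNReal.ofReal ((r * 2 ^ (k+1)) ^ Module.finrank ℝ (Space N)) * v :=
            Measure.addHaar_ball volume x (by positivity)
        _ = ENNReal.ofReal ((r * 2 ^ (k+1)) ^ (N:ℕ)) * v := by
            rw [finrank_euclideanSpace_fin]
    have hptwise : ∀ y ∈ A k, ENNReal.ofReal (‖y - x‖ ^ (-s)) ≤
        ENNReal.ofReal ((r * 2 ^ k) ^ (-s)) := by
      intro y hy
      apply ENNReal.ofReal_le_ofReal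
      apply Real.rpow_le_rpow_of_nonpos (by positivity) _ (by linarith)
      have := hy.2
      simp only [mem_ball, dist_eq_norm, not_lt] at this
      exact this
    calc (∫⁻ y in A k, ENNReal.ofReal (‖y - x‖ ^ (-s)))
        ≤ ∫⁻ _ in A k, ENNReal.ofReal ((r * 2 ^ k) ^ (-s)) :=
          setLIntegral_mono' (measurableSet_ball.diff measurableSet_ball) hptwise
      _ = ENNReal.ofReal ((r * 2 ^ k) ^ (-s)) * volume (A k) := setLIntegral_const _ _
      _ ≤ ENNReal.ofReal ((r * 2 ^ k) ^ (-s)) *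
            (ENNReal.ofReal ((r * 2 ^ (k+1)) ^ (N:ℕ)) * v) := by
          exact mul_le_mul_right hball _
      _ = ENNReal.ofReal ((r * 2 ^ k) ^ (-s) * (r * 2 ^ (k+1)) ^ (N:ℕ)) * v := by
          rw [← mul_assoc, ← ENNReal.ofReal_mul (by positivity)]
      _ = ENNReal.ofReal (r ^ ((N:ℝ) - s) * (2:ℝ) ^ (N:ℝ) *
            ((2:ℝ) ^ ((N:ℝ) - s)) ^ k) * v := by rw [key k]
      _ = ENNReal.ofReal (r ^ ((N:ℝ) - s) * (2:ℝ) ^ (N:ℝ)) *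
            ENNReal.ofReal ((2:ℝ) ^ ((N:ℝ) - s)) ^ k * v := by
          rw [ENNReal.ofReal_mul (by positivity), ENNReal.ofReal_pow (by positivity)]
  calc (∫⁻ y in {y : Space N | r ≤ ‖y - x‖}, ENNReal.ofReal (‖y - x‖ ^ (-s)))
      ≤ ∑' k, ∫⁻ y in A k, ENNReal.ofReal (‖y - x‖ ^ (-s)) := hmono
    _ ≤ ∑' k, ENNReal.ofReal (r ^ ((N:ℝ) - s) * (2:ℝ) ^ (N:ℝ)) *
          ENNReal.ofReal ((2:ℝ) ^ ((N:ℝ) - s)) ^ k * v := ENNReal.tsum_le_tsum hAk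
    _ = ENNReal.ofReal (r ^ ((N:ℝ) - s) * (2:ℝ) ^ (N:ℝ)) * v *
          ∑' k, ENNReal.ofReal ((2:ℝ) ^ ((N:ℝ) - s)) ^ k := by
        rw [← ENNReal.tsum_mul_left]
        congr 1; ext k; ring
    _ = ENNReal.ofReal (r ^ ((N:ℝ) - s)) *
          (ENNReal.ofReal ((2:ℝ) ^ (N:ℝ)) * v *
            (1 - ENNReal.ofReal ((2:ℝ) ^ ((N:ℝ) - s)))⁻¹) := by
        rw [ENNReal.tsum_geometric, ENNReal.ofReal_mul (by positivity)]
        ring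


/-- Hölder split estimate. -/
lemma key_split {N : ℕ} {lam q : ℝ} (hN : 1 ≤ N) (hlam : 0 < lam) (hq0 : 0 < q) (hq1 : q < 1)
    {ρ : Space N → ℝ} (hm : Measurable ρ) (h0 : 0 ≤ ρ) (x : Space N) {r : ℝ} (hr : 0 < r)
    {s : ℝ} (hsdef : s = lam * q / (1 - q)) {Cg : ℝ≥0∞}
    (hCg : (∫⁻ y in {y : Space N | r ≤ ‖y - x‖}, ENNReal.ofReal (‖y - x‖ ^ (-s))) ≤
        ENNReal.ofReal (r ^ ((N : ℝ) - s)) * Cg) :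
    (∫⁻ y, ENNReal.ofReal (ρ y ^ q)) ≤
      (∫⁻ y, ENNReal.ofReal (ρ y)) ^ q *
        (ENNReal.ofReal (r ^ ((N : ℕ) : ℝ)) * volume (ball (0 : Space N) 1)) ^ (1 - q) +
      (∫⁻ y, ENNReal.ofReal (‖x - y‖ ^ lam) * ENNReal.ofReal (ρ y)) ^ q *
        (ENNReal.ofReal (r ^ ((N : ℝ) - s)) * Cg) ^ (1 - q) := by
  haveI : Nontrivial (Space N) := by
    apply Module.nontrivial_of_finrank_pos (R := ℝ)
    rw [finrank_euclideanSpace_fin]; omega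
  have hq1' : 0 < 1 - q := by linarith
  set f : Space N → ℝ≥0∞ := fun y => ENNReal.ofReal (ρ y) with hf
  set g : Space N → ℝ≥0∞ := fun y => ENNReal.ofReal (‖x - y‖ ^ lam) with hg
  have hfm : Measurable f := ENNReal.measurable_ofReal.comp hm
  have hgm : Measurable g := by
    apply ENNReal.measurable_ofReal.comp
    exact ((Real.continuous_rpow_const hlam.le).comp
      (continuous_const.sub continuous_id).norm).measurable
  have hpq : Real.HolderConjugate (1/q) (1/(1-q)) := by
    refine ⟨?_, by positivity, by positivity⟩
    · rw [one_div, one_div, inv_inv, inv_inv]; ring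
  have hfq : (fun y => ENNReal.ofReal (ρ y ^ q)) = fun y => f y ^ q := by
    ext y; exact (ENNReal.ofReal_rpow_of_nonneg (h0 y) hq0.le).symm
  have hrpow_q : ∀ z : ℝ≥0∞, (z ^ q) ^ (1/q) = z := by
    intro z
    rw [← ENNReal.rpow_mul, mul_one_div, div_self hq0.ne', ENNReal.rpow_one]
  rw [hfq, ← lintegral_add_compl (fun y => f y ^ q) (measurableSet_ball (x := x) (ε := r))]
  gcongr
  · -- inside the ball
    have hH := ENNReal.lintegral_mul_le_Lp_mul_Lq (volume.restrict (ball x r)) hpq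
      (f := fun y => f y ^ q) (g := fun _ => (1:ℝ≥0∞))
      (hfm.pow_const q).aemeasurable aemeasurable_const
    simp only [Pi.mul_apply, mul_one] at hH
    calc (∫⁻ y in ball x r, f y ^ q)
        ≤ (∫⁻ y in ball x r, (f y ^ q) ^ (1/q)) ^ (1/(1/q)) *
            (∫⁻ y in ball x r, (1:ℝ≥0∞) ^ (1/(1-q))) ^ (1/(1/(1-q))) := hH
      _ = (∫⁻ y in ball x r, f y) ^ q * (volume (ball x r)) ^ (1-q) := by
          simp only [hrpow_q, one_div_one_div, ENNReal.one_rpow, lintegral_one,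
            Measure.restrict_apply_univ]
      _ ≤ (∫⁻ y, f y) ^ q *
            (ENNReal.ofReal (r ^ ((N : ℕ) : ℝ)) * volume (ball (0 : Space N) 1)) ^ (1-q) := by
          gcongr
          · exact Measure.restrict_le_self
          · rw [Measure.addHaar_ball volume x hr.le, finrank_euclideanSpace_fin,
              Real.rpow_natCast]
  · -- outside the ball
    have hBc : (ball x r)ᶜ = {y : Space N | r ≤ ‖y - x‖} := by
      ext y; simp [mem_ball, dist_eq_norm, not_lt]
    have hgpos : ∀ y ∈ (ball x r)ᶜ, g y ≠ 0 ∧ g y ≠ ∞ := by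
      intro y hy
      rw [hBc] at hy
      have hyx : (0:ℝ) < ‖x - y‖ := by
        rw [norm_sub_rev]; exact lt_of_lt_of_le hr hy
      refine ⟨?_, ENNReal.ofReal_ne_top⟩
      simp only [hg, ne_eq, ENNReal.ofReal_eq_zero, not_le]
      positivity
    have hcongr : ∫⁻ y in (ball x r)ᶜ, f y ^ q =
        ∫⁻ y in (ball x r)ᶜ, ((fun y => (g y * f y) ^ q) * (fun y => g y ^ (-q))) y := by
      apply setLIntegral_congr_fun measurableSet_ball.compl
      intro y hy
      obtain ⟨hg0, hgtop⟩ := hgpos y hy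
      simp only [Pi.mul_apply]
      rw [ENNReal.mul_rpow_of_nonneg _ _ hq0.le, mul_assoc, mul_comm (f y ^ q),
        ← mul_assoc, ← ENNReal.rpow_add _ _ hg0 hgtop]
      simp
    rw [hcongr]
    calc (∫⁻ y in (ball x r)ᶜ, ((fun y => (g y * f y) ^ q) * (fun y => g y ^ (-q))) y)
        ≤ (∫⁻ y in (ball x r)ᶜ, ((g y * f y) ^ q) ^ (1/q)) ^ (1/(1/q)) *
            (∫⁻ y in (ball x r)ᶜ, (g y ^ (-q)) ^ (1/(1-q))) ^ (1/(1/(1-q))) :=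
          ENNReal.lintegral_mul_le_Lp_mul_Lq _ hpq
            (((hgm.mul hfm).pow_const q).aemeasurable)
            ((hgm.pow_const (-q)).aemeasurable)
      _ = (∫⁻ y in (ball x r)ᶜ, g y * f y) ^ q *
            (∫⁻ y in (ball x r)ᶜ, g y ^ (-q * (1/(1-q)))) ^ (1-q) := by
          simp only [hrpow_q, one_div_one_div, ← ENNReal.rpow_mul]
      _ ≤ (∫⁻ y, g y * f y) ^ q * (ENNReal.ofReal (r ^ ((N : ℝ) - s)) * Cg) ^ (1-q) := by
          gcongr
          · exact Measure.restrict_le_self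
          · -- weight integral bound
            have : ∫⁻ y in (ball x r)ᶜ, g y ^ (-q * (1/(1-q))) =
                ∫⁻ y in {y : Space N | r ≤ ‖y - x‖}, ENNReal.ofReal (‖y - x‖ ^ (-s)) := by
              rw [hBc]
              apply setLIntegral_congr_fun
              · exact measurableSet_le measurable_const (measurable_id.sub_const x).norm
              intro y hy
              simp only [Set.mem_setOf_eq] at hy
              have hyx : (0:ℝ) < ‖x - y‖ := by
                rw [norm_sub_rev]; exact lt_of_lt_of_le hr hy
              simp only [hg]
              rw [show ENNReal.ofReal (‖x - y‖ ^ lam) ^ (-q * (1/(1-q))) =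
                  ENNReal.ofReal ((‖x - y‖ ^ lam) ^ (-q * (1/(1-q)))) from
                ENNReal.ofReal_rpow_of_pos (by positivity),
                ← Real.rpow_mul (norm_nonneg (x - y)), norm_sub_rev x y]
              congr 1
              rw [hsdef]; field_simp
            rw [this]
            exact hCg




open Metric in
lemma adm_pos {N : ℕ} {q : ℝ} (hq0 : 0 < q) {ρ : Space N → ℝ} (h : Adm N q ρ) :
    0 < (mass N ρ).toReal ∧ 0 < (qnorm N q ρ).toReal := by
  obtain ⟨hm, h0, hMfin, hQfin, hne⟩ := h
  have hfm : Measurable fun x => ENNReal.ofReal (ρ x) := ENNReal.measurable_ofReal.comp hm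
  have hfqm : Measurable fun x => ENNReal.ofReal (ρ x ^ q) :=
    ENNReal.measurable_ofReal.comp
      ((Real.continuous_rpow_const hq0.le).measurable.comp hm)
  constructor
  · refine ENNReal.toReal_pos ?_ hMfin.ne
    intro hzero
    apply hne
    have h1 := (lintegral_eq_zero_iff hfm).mp hzero
    filter_upwards [h1] with x hx
    have hle : ρ x ≤ 0 := ENNReal.ofReal_eq_zero.mp hx
    exact le_antisymm hle (h0 x)
  · refine ENNReal.toReal_pos ?_ hQfin.ne
    intro hzero
    apply hne
    have h1 := (lintegral_eq_zero_iff hfqm).mp hzero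
    filter_upwards [h1] with x hx
    have hle : ρ x ^ q ≤ 0 := ENNReal.ofReal_eq_zero.mp hx
    by_contra hxne
    have hxpos : 0 < ρ x := lt_of_le_of_ne (h0 x) (Ne.symm hxne)
    exact absurd hle (not_le.mpr (Real.rpow_pos_of_pos hxpos q))

lemma denom_repr {N : ℕ} {lam q : ℝ} (hq0 : 0 < q) {ρ : Space N → ℝ} (hAdm : Adm N q ρ) :
    denom N lam q ρ = ENNReal.ofReal ((mass N ρ).toReal ^ alpha N lam q *
      (qnorm N q ρ).toReal ^ ((2 - alpha N lam q) / q)) := by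
  obtain ⟨hm0, hQQ0⟩ := adm_pos hq0 hAdm
  set m : ℝ := (mass N ρ).toReal with hmdef
  set QQ : ℝ := (qnorm N q ρ).toReal with hQQdef
  have hMof : mass N ρ = ENNReal.ofReal m := (ENNReal.ofReal_toReal hAdm.2.2.1.ne).symm
  have hQof : qnorm N q ρ = ENNReal.ofReal QQ := (ENNReal.ofReal_toReal hAdm.2.2.2.1.ne).symm
  rw [denom, hMof, hQof, ENNReal.ofReal_rpow_of_pos hm0, ENNReal.ofReal_rpow_of_pos hQQ0,
    ← ENNReal.ofReal_mul (by positivity)]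

end RHLS


set_option maxHeartbeats 1000000 in
/-- if `N/(N+λ) < q < 1`, then `C_{N,λ,q} > 0`; that is, there is `C > 0`
such that `I_λ[ρ] ≥ C (∫ρ)^α (∫ρ^q)^{(2-α)/q}` for all admissible ρ. -/
theorem stmt3 (N : ℕ) (hN : 1 ≤ N) (lam q : ℝ) (hlam : 0 < lam)
    (hq : (N : ℝ) / ((N : ℝ) + lam) < q) (hq1 : q < 1) :
    0 < RHLS.C N lam q ∧
    ∃ C : ℝ, 0 < C ∧ ∀ ρ : RHLS.Space N → ℝ, RHLS.Adm N q ρ →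
      ENNReal.ofReal C * RHLS.denom N lam q ρ ≤ RHLS.I N lam ρ := by

  have hN0 : (0:ℝ) < N := by exact_mod_cast Nat.lt_of_lt_of_le Nat.zero_lt_one hN
  have hNlam : (0:ℝ) < (N:ℝ) + lam := by linarith
  have hq0 : 0 < q := lt_trans (div_pos hN0 hNlam) hq
  have hq1' : (0:ℝ) < 1 - q := by linarith
  set s : ℝ := lam * q / (1 - q) with hsdef
  have hsN : (N:ℝ) < s := by
    rw [hsdef, lt_div_iff₀ hq1']
    have h := (div_lt_iff₀ hNlam).mp hq
    nlinarith
  obtain ⟨Cg, hCgtop, hCg⟩ := RHLS.weight_bound hN hsN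
  haveI := RHLS.nontrivial_space hN
  set v : ℝ≥0∞ := volume (Metric.ball (0 : RHLS.Space N) 1) with hv
  have hvpos : 0 < v := Metric.measure_ball_pos _ _ one_pos
  have hvne : v ≠ ⊤ := measure_ball_lt_top.ne
  set v0 : ℝ := v.toReal with hv0def
  have hv0 : 0 < v0 := ENNReal.toReal_pos hvpos.ne' hvne
  have hvof : v = ENNReal.ofReal v0 := (ENNReal.ofReal_toReal hvne).symm
  set CgR : ℝ := Cg.toReal + 1 with hCgRdef
  have hCgRpos : 0 < CgR := by positivity
  have hCgle : Cg ≤ ENNReal.ofReal CgR := by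
    rw [hCgRdef]
    calc Cg = ENNReal.ofReal Cg.toReal := (ENNReal.ofReal_toReal hCgtop).symm
      _ ≤ ENNReal.ofReal (Cg.toReal + 1) := ENNReal.ofReal_le_ofReal (by linarith)
  set c1 : ℝ := v0 ^ (1 - q) with hc1def
  have hc1 : 0 < c1 := Real.rpow_pos_of_pos hv0 _
  set c2 : ℝ := CgR ^ (1 - q) with hc2def
  have hc2 : 0 < c2 := Real.rpow_pos_of_pos hCgRpos _
  set e1 : ℝ := (N:ℝ) * (1 - q) with he1def
  have he1 : 0 < e1 := by positivity
  set e2 : ℝ := ((N:ℝ) - s) * (1 - q) with he2def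
  set CC : ℝ := (2*c2) ^ (-(1/q)) * (2*c1) ^ (e2/(q*e1)) with hCCdef
  have hCC : 0 < CC := by positivity
  have hα : RHLS.alpha N lam q = 1 + e2/e1 := by
    rw [RHLS.alpha, he2def, he1def, hsdef]
    field_simp
    ring
  have main : ∀ ρ : RHLS.Space N → ℝ, RHLS.Adm N q ρ →
      ENNReal.ofReal CC * RHLS.denom N lam q ρ ≤ RHLS.I N lam ρ := by
    intro ρ hAdm
    obtain ⟨hm0, hQQ0⟩ := RHLS.adm_pos hq0 hAdm
    have hdenom := RHLS.denom_repr (lam := lam) hq0 hAdm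
    obtain ⟨hmeas, h0, hMfin, hQfin, hne⟩ := hAdm
    have hfm : Measurable fun x => ENNReal.ofReal (ρ x) := ENNReal.measurable_ofReal.comp hmeas
    set m : ℝ := (RHLS.mass N ρ).toReal with hmdef
    set QQ : ℝ := (RHLS.qnorm N q ρ).toReal with hQQdef
    have hMof : RHLS.mass N ρ = ENNReal.ofReal m := (ENNReal.ofReal_toReal hMfin.ne).symm
    have hQof : RHLS.qnorm N q ρ = ENNReal.ofReal QQ := (ENNReal.ofReal_toReal hQfin.ne).symm
    set r : ℝ := (QQ / (2 * c1 * m ^ q)) ^ (1/e1) with hrdef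
    have hr : 0 < r := by positivity
    set κ : ℝ := (QQ / (2 * c2 * r ^ e2)) ^ (1/q) with hκdef
    have hκ : 0 < κ := by positivity
    have hre1 : r ^ e1 = QQ / (2 * c1 * m ^ q) := by
      rw [hrdef, ← Real.rpow_mul (by positivity), one_div, inv_mul_cancel₀ he1.ne',
        Real.rpow_one]
    have idB : m ^ q * (r ^ ((N:ℕ):ℝ) * v0) ^ (1 - q) = QQ / 2 := by
      rw [Real.mul_rpow (by positivity) (by positivity), ← Real.rpow_mul hr.le, ← he1def,
        hre1, ← hc1def]
      field_simp
    have idC : (r ^ ((N:ℝ) - s) * CgR) ^ (1 - q) = c2 * r ^ e2 := by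
      rw [Real.mul_rpow (by positivity) (by positivity), ← Real.rpow_mul hr.le, ← he2def,
        ← hc2def]
      ring
    have hK : ∀ x : RHLS.Space N,
        ENNReal.ofReal κ ≤ ∫⁻ y, ENNReal.ofReal (‖x - y‖ ^ lam) * ENNReal.ofReal (ρ y) := by
      intro x
      set K : ℝ≥0∞ := ∫⁻ y, ENNReal.ofReal (‖x - y‖ ^ lam) * ENNReal.ofReal (ρ y) with hKdef
      by_cases hKtop : K = ⊤
      · rw [hKtop]; exact le_top
      set k0 : ℝ := K.toReal with hk0def
      have hk0 : 0 ≤ k0 := ENNReal.toReal_nonneg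
      have hKof : K = ENNReal.ofReal k0 := (ENNReal.ofReal_toReal hKtop).symm
      have hsplit := RHLS.key_split hN hlam hq0 hq1 hmeas h0 x hr hsdef (hCg x r hr)
      have hT1 : (∫⁻ y, ENNReal.ofReal (ρ y)) ^ q *
          (ENNReal.ofReal (r ^ ((N:ℕ):ℝ)) * volume (Metric.ball (0 : RHLS.Space N) 1)) ^ (1-q)
          = ENNReal.ofReal (QQ / 2) := by
        rw [show (∫⁻ y, ENNReal.ofReal (ρ y)) = RHLS.mass N ρ from rfl, hMof, ← hv, hvof,
          ENNReal.ofReal_rpow_of_pos hm0, ← ENNReal.ofReal_mul (by positivity),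
          ENNReal.ofReal_rpow_of_pos (by positivity), ← ENNReal.ofReal_mul (by positivity),
          idB]
      have hT2 : K ^ q * (ENNReal.ofReal (r ^ ((N:ℝ) - s)) * Cg) ^ (1-q) ≤
          ENNReal.ofReal (k0 ^ q * (c2 * r ^ e2)) := by
        calc K ^ q * (ENNReal.ofReal (r ^ ((N:ℝ) - s)) * Cg) ^ (1-q)
            ≤ K ^ q * (ENNReal.ofReal (r ^ ((N:ℝ) - s)) * ENNReal.ofReal CgR) ^ (1-q) := by
              gcongr
          _ = ENNReal.ofReal (k0 ^ q * (c2 * r ^ e2)) := by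
              rw [hKof, ENNReal.ofReal_rpow_of_nonneg hk0 hq0.le,
                ← ENNReal.ofReal_mul (by positivity),
                ENNReal.ofReal_rpow_of_pos (by positivity),
                ← ENNReal.ofReal_mul (by positivity), idC]
      have hcomb : ENNReal.ofReal QQ ≤ ENNReal.ofReal (QQ/2 + k0 ^ q * (c2 * r ^ e2)) := by
        rw [ENNReal.ofReal_add (by positivity) (by positivity)]
        calc ENNReal.ofReal QQ = RHLS.qnorm N q ρ := hQof.symm
          _ = ∫⁻ y, ENNReal.ofReal (ρ y ^ q) := rfl
          _ ≤ _ := hsplit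
          _ ≤ ENNReal.ofReal (QQ/2) + ENNReal.ofReal (k0 ^ q * (c2 * r ^ e2)) := by
              rw [← hT1]
              exact add_le_add le_rfl hT2
      have hreal : QQ ≤ QQ/2 + k0 ^ q * (c2 * r ^ e2) :=
        (ENNReal.ofReal_le_ofReal_iff (by positivity)).mp hcomb
      have hk0q : QQ / (2 * c2 * r ^ e2) ≤ k0 ^ q := by
        rw [div_le_iff₀ (by positivity)]
        have h2 : k0 ^ q * (2 * c2 * r ^ e2) = 2 * (k0 ^ q * (c2 * r ^ e2)) := by ring
        rw [h2]; linarith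
      have hκk0 : κ ≤ k0 := by
        have h1 : κ ≤ (k0 ^ q) ^ (1/q) :=
          Real.rpow_le_rpow (by positivity) hk0q (by positivity)
        rwa [← Real.rpow_mul hk0, mul_one_div, div_self hq0.ne', Real.rpow_one] at h1
      rw [hKof]
      exact ENNReal.ofReal_le_ofReal hκk0
    have hgm_glob : ∀ x : RHLS.Space N, Measurable
        (fun y : RHLS.Space N => ENNReal.ofReal (‖x - y‖ ^ lam) * ENNReal.ofReal (ρ y)) := by
      intro x
      exact (ENNReal.measurable_ofReal.comp
        (((Real.continuous_rpow_const hlam.le).comp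
          (continuous_const.sub continuous_id).norm).measurable)).mul hfm
    have hI : ENNReal.ofReal κ * RHLS.mass N ρ ≤ RHLS.I N lam ρ := by
      rw [RHLS.I, RHLS.mass, ← lintegral_const_mul _ hfm]
      refine lintegral_mono fun x => ?_
      have hinner : (∫⁻ y, ENNReal.ofReal (ρ x) * ENNReal.ofReal (‖x - y‖ ^ lam) *
          ENNReal.ofReal (ρ y)) = ENNReal.ofReal (ρ x) *
            ∫⁻ y, ENNReal.ofReal (‖x - y‖ ^ lam) * ENNReal.ofReal (ρ y) := by
        simp_rw [mul_assoc]
        exact lintegral_const_mul _ (hgm_glob x)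
      rw [hinner, mul_comm (ENNReal.ofReal κ)]
      exact mul_le_mul_right (hK x) _
    have hlogr : Real.log r = (1/e1) * (Real.log QQ - Real.log (2*c1) - q * Real.log m) := by
      rw [hrdef, Real.log_rpow (by positivity),
        Real.log_div (by positivity : (0:ℝ) < QQ).ne' (by positivity : (0:ℝ) < 2*c1*m^q).ne',
        Real.log_mul (by positivity : (0:ℝ) < 2*c1).ne' (by positivity : (0:ℝ) < m^q).ne',
        Real.log_rpow hm0]
      ring
    have hlogκ : Real.log κ = (1/q) * (Real.log QQ - Real.log (2*c2) - e2 * Real.log r) := by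
      rw [hκdef, Real.log_rpow (by positivity),
        Real.log_div (by positivity : (0:ℝ) < QQ).ne'
          (by positivity : (0:ℝ) < 2*c2*r^e2).ne',
        Real.log_mul (by positivity : (0:ℝ) < 2*c2).ne' (by positivity : (0:ℝ) < r^e2).ne',
        Real.log_rpow hr]
      ring
    have hlogCC : Real.log CC = -(1/q) * Real.log (2*c2) + e2/(q*e1) * Real.log (2*c1) := by
      rw [hCCdef, Real.log_mul (by positivity : (0:ℝ) < (2*c2) ^ (-(1/q))).ne'
        (by positivity : (0:ℝ) < (2*c1) ^ (e2/(q*e1))).ne',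
        Real.log_rpow (by positivity), Real.log_rpow (by positivity)]
    have hkey : CC * (m ^ RHLS.alpha N lam q * QQ ^ ((2 - RHLS.alpha N lam q)/q)) = κ * m := by
      have hL : 0 < CC * (m ^ RHLS.alpha N lam q * QQ ^ ((2 - RHLS.alpha N lam q)/q)) := by
        positivity
      have hR : 0 < κ * m := by positivity
      refine Real.log_injOn_pos (Set.mem_Ioi.mpr hL) (Set.mem_Ioi.mpr hR) ?_
      rw [Real.log_mul hCC.ne' (by positivity :
            (0:ℝ) < m ^ RHLS.alpha N lam q * QQ ^ ((2 - RHLS.alpha N lam q)/q)).ne',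
        Real.log_mul (by positivity : (0:ℝ) < m ^ RHLS.alpha N lam q).ne'
          (by positivity : (0:ℝ) < QQ ^ ((2 - RHLS.alpha N lam q)/q)).ne',
        Real.log_rpow hm0, Real.log_rpow hQQ0, Real.log_mul hκ.ne' hm0.ne',
        hlogCC, hlogκ, hlogr, hα]
      field_simp
      ring
    calc ENNReal.ofReal CC * RHLS.denom N lam q ρ
        = ENNReal.ofReal (CC * (m ^ RHLS.alpha N lam q *
            QQ ^ ((2 - RHLS.alpha N lam q)/q))) := by
          rw [hdenom, ← ENNReal.ofReal_mul hCC.le]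
      _ = ENNReal.ofReal (κ * m) := by rw [hkey]
      _ = ENNReal.ofReal κ * RHLS.mass N ρ := by rw [ENNReal.ofReal_mul hκ.le, hMof]
      _ ≤ RHLS.I N lam ρ := hI
  refine ⟨?_, CC, hCC, main⟩
  have hCpos : 0 < ENNReal.ofReal CC := ENNReal.ofReal_pos.mpr hCC
  refine lt_of_lt_of_le hCpos (le_sInf ?_)
  rintro c ⟨ρ, hAdm, rfl⟩
  obtain ⟨hm0, hQQ0⟩ := RHLS.adm_pos hq0 hAdm
  have hdenom := RHLS.denom_repr (lam := lam) hq0 hAdm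
  rw [RHLS.Qfun, ENNReal.le_div_iff_mul_le (Or.inl ?_) (Or.inl ?_)]
  · exact main ρ hAdm
  · rw [hdenom]
    exact (ENNReal.ofReal_pos.mpr (by positivity)).ne'
  · rw [hdenom]
    exact ENNReal.ofReal_ne_top
end
end

section
/- Let N ≥ 1 be an integer, λ > 0 and N/(N+λ) < q < 1, and set θ := N(1−q)/(λq), which lies in (0,1). Then there is a constant c_{N,λ,q} > 0 such that for every measurable ρ ≥ 0 on ℝ^N one has (∫_{ℝ^N} ρ dx)^{1−θ} (∫_{ℝ^N} |x|^λ ρ(x) dx)^{θ} ≥ c_{N,λ,q} (∫_{ℝ^N} ρ^q dx)^{1/q}. -/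
open MeasureTheory ENNReal Filter Topology

noncomputable section

open Metric Set Module in
private lemma RHLS.holder_aux {α : Type*} [MeasurableSpace α] (μ : Measure α) {q : ℝ} (hq0 : 0 < q)
    (hq1 : q < 1) {f g : α → ℝ≥0∞} (hf : AEMeasurable f μ) (hg : AEMeasurable g μ) :
    ∫⁻ a, f a * g a ∂μ ≤
      (∫⁻ a, f a ^ (1/q) ∂μ) ^ q * (∫⁻ a, g a ^ (1/(1-q)) ∂μ) ^ (1-q) := by
  have hpq : (1/q).HolderConjugate (1/(1-q)) := by
    rw [Real.holderConjugate_iff]; constructor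
    · rw [lt_div_iff₀ hq0]; linarith
    · rw [one_div, one_div, inv_inv, inv_inv]; ring
  have h := ENNReal.lintegral_mul_le_Lp_mul_Lq μ hpq hf hg
  simpa [one_div_one_div] using h

open Metric Set Module in
private lemma RHLS.tail_one_lt_top (N : ℕ) {s : ℝ} (hs : (N:ℝ) < s) :
    ∫⁻ x : RHLS.Space N in (ball (0:RHLS.Space N) 1)ᶜ, ENNReal.ofReal (‖x‖ ^ (-s)) < ⊤ := by
  have hs0 : 0 < s := lt_of_le_of_lt (Nat.cast_nonneg N) hs
  have hb : ∀ x : RHLS.Space N, x ∈ (ball (0:RHLS.Space N) 1)ᶜ →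
      ENNReal.ofReal (‖x‖ ^ (-s)) ≤ ENNReal.ofReal ((2:ℝ) ^ s * (1 + ‖x‖) ^ (-s)) := by
    intro x hx
    simp only [mem_compl_iff, mem_ball, dist_zero_right, not_lt] at hx
    apply ENNReal.ofReal_le_ofReal
    have h1 : (1 + ‖x‖) / 2 ≤ ‖x‖ := by linarith
    have h2 : ‖x‖ ^ (-s) ≤ ((1 + ‖x‖)/2) ^ (-s) := by
      apply Real.rpow_le_rpow_of_nonpos (by linarith) h1 (by linarith)
    calc ‖x‖ ^ (-s) ≤ ((1 + ‖x‖)/2) ^ (-s) := h2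
      _ = (1 + ‖x‖) ^ (-s) / (2:ℝ) ^ (-s) := by
          rw [Real.div_rpow (by linarith) (by norm_num)]
      _ = (2:ℝ) ^ s * (1 + ‖x‖) ^ (-s) := by
          rw [Real.rpow_neg (by norm_num : (0:ℝ) ≤ 2)]
          field_simp
  calc ∫⁻ x : RHLS.Space N in (ball (0:RHLS.Space N) 1)ᶜ, ENNReal.ofReal (‖x‖ ^ (-s))
      ≤ ∫⁻ x : RHLS.Space N in (ball (0:RHLS.Space N) 1)ᶜ,
          ENNReal.ofReal ((2:ℝ)^s * (1 + ‖x‖) ^ (-s)) :=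
        setLIntegral_mono (by fun_prop) hb
    _ ≤ ∫⁻ x : RHLS.Space N, ENNReal.ofReal ((2:ℝ)^s * (1 + ‖x‖) ^ (-s)) :=
        setLIntegral_le_lintegral _ _
    _ = ENNReal.ofReal ((2:ℝ)^s) * ∫⁻ x : RHLS.Space N, ENNReal.ofReal ((1 + ‖x‖) ^ (-s)) := by
        simp_rw [ENNReal.ofReal_mul (by positivity : (0:ℝ) ≤ (2:ℝ)^s)]
        rw [lintegral_const_mul]
        fun_prop
    _ < ⊤ := by
        apply ENNReal.mul_lt_top (by simp)
        exact finite_integral_one_add_norm (E := RHLS.Space N) (μ := volume) (r := s)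
          (by simpa using hs)

open Metric Set Module in
private lemma RHLS.tail_scaling (N : ℕ) {s R : ℝ} (hR : 0 < R) :
    ∫⁻ x : RHLS.Space N in (ball (0:RHLS.Space N) R)ᶜ, ENNReal.ofReal (‖x‖ ^ (-s)) =
      ENNReal.ofReal (R ^ ((N:ℝ) - s)) *
        ∫⁻ x : RHLS.Space N in (ball (0:RHLS.Space N) 1)ᶜ, ENNReal.ofReal (‖x‖ ^ (-s)) := by
  have hfr : Module.finrank ℝ (RHLS.Space N) = N := finrank_euclideanSpace_fin
  set μ : Measure (RHLS.Space N) := volume with hμ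
  set w : RHLS.Space N → ℝ≥0∞ := fun x => ENNReal.ofReal (‖x‖ ^ (-s)) with hw
  have hwm : Measurable w := by fun_prop
  set g : RHLS.Space N → ℝ≥0∞ := ((ball (0:RHLS.Space N) R)ᶜ).indicator w with hg
  set g1 : RHLS.Space N → ℝ≥0∞ := ((ball (0:RHLS.Space N) 1)ᶜ).indicator w with hg1
  have hmg : Measurable g := hwm.indicator measurableSet_ball.compl
  have hmg1 : Measurable g1 := hwm.indicator measurableSet_ball.compl
  have h1 : ∫⁻ x, g (R • x) ∂μ
      = ENNReal.ofReal |((R ^ Module.finrank ℝ (RHLS.Space N)))⁻¹| * ∫⁻ x, g x ∂μ := by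
    rw [← lintegral_map hmg (measurable_const_smul R), Measure.map_addHaar_smul μ hR.ne',
      lintegral_smul_measure, smul_eq_mul]
  have h2 : ∀ x, g (R • x) = ENNReal.ofReal (R ^ (-s)) * g1 x := by
    intro x
    have hn : ‖R • x‖ = R * ‖x‖ := by
      rw [norm_smul, Real.norm_eq_abs, abs_of_pos hR]
    by_cases hx : x ∈ (ball (0:RHLS.Space N) 1)ᶜ
    · have hx1 : (1:ℝ) ≤ ‖x‖ := by
        simpa [mem_ball, dist_zero_right] using hx
      have hx' : R • x ∈ (ball (0:RHLS.Space N) R)ᶜ := by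
        simp only [mem_compl_iff, mem_ball, dist_zero_right, not_lt, hn]
        nlinarith
      rw [hg, hg1, indicator_of_mem hx', indicator_of_mem hx, hw]
      simp only
      rw [hn, Real.mul_rpow hR.le (norm_nonneg x),
        ENNReal.ofReal_mul (by positivity)]
    · have hx1 : ‖x‖ < 1 := by
        simpa [mem_ball, dist_zero_right] using not_not.mp (by simpa using hx)
      have hx' : R • x ∉ (ball (0:RHLS.Space N) R)ᶜ := by
        simp only [mem_compl_iff, mem_ball, dist_zero_right, not_lt, not_le, hn, not_not]
        nlinarith
      rw [hg, hg1, indicator_of_notMem hx', indicator_of_notMem hx, mul_zero]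
  have h3 : ∫⁻ x, g (R • x) ∂μ = ENNReal.ofReal (R ^ (-s)) * ∫⁻ x, g1 x ∂μ := by
    simp_rw [h2]; rw [lintegral_const_mul _ hmg1]
  have habs : |((R ^ Module.finrank ℝ (RHLS.Space N)))⁻¹| = (R ^ N)⁻¹ := by
    rw [hfr, abs_of_pos (by positivity)]
  have hkey : ENNReal.ofReal ((R ^ N)⁻¹) * ∫⁻ x, g x ∂μ
      = ENNReal.ofReal (R ^ (-s)) * ∫⁻ x, g1 x ∂μ := by
    rw [← h3, h1, habs]
  have hg_eq : ∫⁻ x, g x ∂μ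
      = ENNReal.ofReal (R ^ N) * (ENNReal.ofReal ((R ^ N)⁻¹) * ∫⁻ x, g x ∂μ) := by
    rw [← mul_assoc, ← ENNReal.ofReal_mul (by positivity), mul_inv_cancel₀ (by positivity),
      ENNReal.ofReal_one, one_mul]
  have hind : ∫⁻ x in (ball (0:RHLS.Space N) R)ᶜ, w x ∂μ = ∫⁻ x, g x ∂μ :=
    (lintegral_indicator measurableSet_ball.compl _).symm
  have hind1 : ∫⁻ x in (ball (0:RHLS.Space N) 1)ᶜ, w x ∂μ = ∫⁻ x, g1 x ∂μ :=
    (lintegral_indicator measurableSet_ball.compl _).symm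
  rw [hind, hind1, hg_eq, hkey, ← mul_assoc, ← ENNReal.ofReal_mul (by positivity)]
  congr 2
  rw [← Real.rpow_natCast R N, ← Real.rpow_add hR, sub_eq_add_neg]


/-- Lemma 4: for `N/(N+λ) < q < 1` and `θ = N(1-q)/(λq)`, there is
`c > 0` with `(∫ρ)^{1-θ} (∫|x|^λρ)^θ ≥ c (∫ρ^q)^{1/q}` for all measurable `ρ ≥ 0`. -/
theorem stmt4 (N : ℕ) (hN : 1 ≤ N) (lam q : ℝ) (hlam : 0 < lam)
    (hq : (N : ℝ) / ((N : ℝ) + lam) < q) (hq1 : q < 1) :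
    ∃ c : ℝ, 0 < c ∧ ∀ ρ : RHLS.Space N → ℝ, Measurable ρ → 0 ≤ ρ →
      ENNReal.ofReal c * RHLS.qnorm N q ρ ^ (1 / q) ≤
        RHLS.mass N ρ ^ (1 - (N : ℝ) * (1 - q) / (lam * q)) *
          RHLS.mom N lam ρ ^ ((N : ℝ) * (1 - q) / (lam * q)) := by
  classical
  have hN0 : (0:ℝ) < N := by exact_mod_cast hN
  have hNlam : (0:ℝ) < (N:ℝ) + lam := by linarith
  have hq0 : 0 < q := lt_trans (div_pos hN0 hNlam) hq
  have h1q : (0:ℝ) < 1 - q := by linarith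
  set θ : ℝ := (N:ℝ) * (1 - q) / (lam * q) with hθ
  have hθ0 : 0 < θ := by positivity
  have hkey : (N:ℝ) * (1 - q) < lam * q := by
    have h := (div_lt_iff₀ hNlam).mp hq
    nlinarith
  have hθ1 : θ < 1 := (div_lt_one (by positivity)).mpr hkey
  set s : ℝ := lam * q / (1 - q) with hs
  have hNs : (N:ℝ) < s := (lt_div_iff₀ h1q).mpr (by nlinarith)
  haveI hNT : Nontrivial (RHLS.Space N) := by
    have h : 0 < Module.finrank ℝ (RHLS.Space N) := by
      rw [finrank_euclideanSpace_fin]; omega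
    exact Module.nontrivial_of_finrank_pos h
  set v1 : ℝ≥0∞ := volume (Metric.ball (0 : RHLS.Space N) 1) with hv1
  set T1 : ℝ≥0∞ :=
    ∫⁻ x : RHLS.Space N in (Metric.ball (0:RHLS.Space N) 1)ᶜ, ENNReal.ofReal (‖x‖ ^ (-s))
    with hT1
  have hv10 : v1 ≠ 0 := (Metric.measure_ball_pos volume 0 one_pos).ne'
  have hv1t : v1 ≠ ⊤ := measure_ball_lt_top.ne
  have hT1t : T1 ≠ ⊤ := (RHLS.tail_one_lt_top N hNs).ne
  set K0 : ℝ≥0∞ := v1 ^ (1-q) + T1 ^ (1-q) with hK0def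
  have hK00 : K0 ≠ 0 := by
    intro h
    have h1 : v1 ^ (1-q) = 0 := by
      have := add_eq_zero.mp h
      exact this.1
    rw [ENNReal.rpow_eq_zero_iff] at h1
    rcases h1 with ⟨h1, _⟩ | ⟨_, h1⟩
    · exact hv10 h1
    · linarith
  have hK0t : K0 ≠ ⊤ := by
    apply ENNReal.add_ne_top.mpr
    exact ⟨ENNReal.rpow_ne_top_of_nonneg h1q.le hv1t, ENNReal.rpow_ne_top_of_nonneg h1q.le hT1t⟩
  set K : ℝ≥0∞ := K0 ^ (1/q) with hKdef
  have hK0' : K ≠ 0 := by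
    rw [hKdef, Ne, ENNReal.rpow_eq_zero_iff]
    rintro (⟨h, _⟩ | ⟨h, hlt⟩)
    · exact hK00 h
    · exact hK0t h
  have hKt : K ≠ ⊤ := by
    rw [hKdef]
    exact ENNReal.rpow_ne_top_of_nonneg (by positivity) hK0t
  have hKr : 0 < K.toReal := ENNReal.toReal_pos hK0' hKt
  refine ⟨(K.toReal)⁻¹, by positivity, ?_⟩
  intro ρ hρ h0ρ
  have hzero : (∀ᵐ x : RHLS.Space N ∂volume, ρ x = 0) → RHLS.qnorm N q ρ = 0 := by
    intro h
    have : (∫⁻ x : RHLS.Space N, ENNReal.ofReal (ρ x ^ q)) = 0 := by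
      rw [lintegral_eq_zero_iff (by fun_prop)]
      filter_upwards [h] with x hx
      simp [hx, Real.zero_rpow hq0.ne']
    exact this
  by_cases hM0 : RHLS.mass N ρ = 0
  · have hae : ∀ᵐ x : RHLS.Space N ∂volume, ρ x = 0 := by
      have h1 : (∫⁻ x : RHLS.Space N, ENNReal.ofReal (ρ x)) = 0 := hM0
      rw [lintegral_eq_zero_iff (by fun_prop)] at h1
      filter_upwards [h1] with x hx
      exact le_antisymm (ENNReal.ofReal_eq_zero.mp hx) (h0ρ x)
    rw [hzero hae, ENNReal.zero_rpow_of_pos (by positivity), mul_zero]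
    exact zero_le
  by_cases hE0 : RHLS.mom N lam ρ = 0
  · have hae : ∀ᵐ x : RHLS.Space N ∂volume, ρ x = 0 := by
      have h1 : (∫⁻ x : RHLS.Space N, ENNReal.ofReal (‖x‖ ^ lam * ρ x)) = 0 := hE0
      rw [lintegral_eq_zero_iff (by fun_prop)] at h1
      have h2 : ∀ᵐ x : RHLS.Space N ∂volume, x ≠ 0 := by
        rw [ae_iff]
        simp only [ne_eq, not_not]
        simpa [Set.setOf_eq_eq_singleton] using measure_singleton (0 : RHLS.Space N)
      filter_upwards [h1, h2] with x hx hx0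
      have hxn : 0 < ‖x‖ := norm_pos_iff.mpr hx0
      have hle : ‖x‖ ^ lam * ρ x ≤ 0 := ENNReal.ofReal_eq_zero.mp hx
      have hpow : 0 < ‖x‖ ^ lam := Real.rpow_pos_of_pos hxn lam
      have hρx : ρ x ≤ 0 := by
        by_contra hc
        push_neg at hc
        nlinarith
      exact le_antisymm hρx (h0ρ x)
    rw [hzero hae, ENNReal.zero_rpow_of_pos (by positivity), mul_zero]
    exact zero_le
  by_cases hMt : RHLS.mass N ρ = ⊤
  · have hne : RHLS.mom N lam ρ ^ θ ≠ 0 := by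
      rw [Ne, ENNReal.rpow_eq_zero_iff]
      rintro (⟨h, _⟩ | ⟨_, h⟩)
      · exact hE0 h
      · linarith
    rw [hMt, ENNReal.top_rpow_of_pos (by linarith), ENNReal.top_mul hne]
    exact le_top
  by_cases hEt : RHLS.mom N lam ρ = ⊤
  · have hne : RHLS.mass N ρ ^ (1 - θ) ≠ 0 := by
      rw [Ne, ENNReal.rpow_eq_zero_iff]
      rintro (⟨h, _⟩ | ⟨_, h⟩)
      · exact hM0 h
      · linarith
    rw [hEt, ENNReal.top_rpow_of_pos hθ0, ENNReal.mul_top hne]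
    exact le_top
  -- main case
  set M : ℝ≥0∞ := RHLS.mass N ρ with hM
  set E : ℝ≥0∞ := RHLS.mom N lam ρ with hE
  set Mr : ℝ := M.toReal with hMrdef
  set Er : ℝ := E.toReal with hErdef
  have hMr : 0 < Mr := ENNReal.toReal_pos hM0 hMt
  have hEr : 0 < Er := ENNReal.toReal_pos hE0 hEt
  have hMof : M = ENNReal.ofReal Mr := (ENNReal.ofReal_toReal hMt).symm
  have hEof : E = ENNReal.ofReal Er := (ENNReal.ofReal_toReal hEt).symm
  set R : ℝ := (Er / Mr) ^ (1/lam) with hRdef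
  have hR0 : 0 < R := Real.rpow_pos_of_pos (div_pos hEr hMr) _
  have hRlam : R ^ lam = Er / Mr := by
    rw [hRdef, ← Real.rpow_mul (div_pos hEr hMr).le, one_div,
      inv_mul_cancel₀ hlam.ne', Real.rpow_one]
  have hEMR : Er = Mr * R ^ lam := by
    rw [hRlam]; field_simp
  -- ball estimate
  have hball : ∫⁻ x : RHLS.Space N in Metric.ball (0:RHLS.Space N) R,
      ENNReal.ofReal (ρ x ^ q) ≤
      M ^ q * (volume (Metric.ball (0:RHLS.Space N) R)) ^ (1-q) := by
    have h := RHLS.holder_aux (volume.restrict (Metric.ball (0:RHLS.Space N) R)) hq0 hq1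
      (f := fun x => ENNReal.ofReal (ρ x ^ q)) (g := fun _ => 1)
      (by fun_prop) aemeasurable_const
    simp only [mul_one] at h
    refine le_trans h ?_
    have e1 : ∀ x : RHLS.Space N,
        (ENNReal.ofReal (ρ x ^ q)) ^ (1/q) = ENNReal.ofReal (ρ x) := by
      intro x
      rw [ENNReal.ofReal_rpow_of_nonneg (Real.rpow_nonneg (h0ρ x) q) (by positivity),
        ← Real.rpow_mul (h0ρ x), mul_one_div, div_self hq0.ne', Real.rpow_one]
    simp_rw [e1, ENNReal.one_rpow]
    refine mul_le_mul' ?_ ?_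
    · exact ENNReal.rpow_le_rpow (setLIntegral_le_lintegral _ _) hq0.le
    · rw [setLIntegral_one]
  -- tail estimate
  have htail : ∫⁻ x : RHLS.Space N in (Metric.ball (0:RHLS.Space N) R)ᶜ,
      ENNReal.ofReal (ρ x ^ q) ≤
      E ^ q * (∫⁻ x : RHLS.Space N in (Metric.ball (0:RHLS.Space N) R)ᶜ,
        ENNReal.ofReal (‖x‖ ^ (-s))) ^ (1-q) := by
    have hcong : ∫⁻ x : RHLS.Space N in (Metric.ball (0:RHLS.Space N) R)ᶜ,
        ENNReal.ofReal (ρ x ^ q)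
        = ∫⁻ x : RHLS.Space N in (Metric.ball (0:RHLS.Space N) R)ᶜ,
            (ENNReal.ofReal ((‖x‖ ^ lam * ρ x) ^ q)) * ENNReal.ofReal (‖x‖ ^ (-(lam * q))) := by
      apply setLIntegral_congr_fun measurableSet_ball.compl
      intro x hx
      beta_reduce
      have hxR : R ≤ ‖x‖ := by
        simpa [Metric.mem_ball, dist_zero_right] using hx
      have hxn : 0 < ‖x‖ := lt_of_lt_of_le hR0 hxR
      rw [← ENNReal.ofReal_mul (Real.rpow_nonneg (mul_nonneg (Real.rpow_nonneg (norm_nonneg x) lam) (h0ρ x)) q)]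
      congr 1
      rw [Real.mul_rpow (Real.rpow_nonneg (norm_nonneg x) lam) (h0ρ x),
        ← Real.rpow_mul (norm_nonneg x), mul_comm (‖x‖ ^ (lam*q)) (ρ x ^ q), mul_assoc,
        ← Real.rpow_add hxn]
      simp
    rw [hcong]
    have h := RHLS.holder_aux (volume.restrict ((Metric.ball (0:RHLS.Space N) R)ᶜ)) hq0 hq1
      (f := fun x => ENNReal.ofReal ((‖x‖ ^ lam * ρ x) ^ q))
      (g := fun x => ENNReal.ofReal (‖x‖ ^ (-(lam * q))))
      (by fun_prop) (by fun_prop)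
    refine le_trans h ?_
    have e1 : ∀ x : RHLS.Space N,
        (ENNReal.ofReal ((‖x‖ ^ lam * ρ x) ^ q)) ^ (1/q)
          = ENNReal.ofReal (‖x‖ ^ lam * ρ x) := by
      intro x
      have hnn : 0 ≤ ‖x‖ ^ lam * ρ x := mul_nonneg (Real.rpow_nonneg (norm_nonneg x) lam) (h0ρ x)
      rw [ENNReal.ofReal_rpow_of_nonneg (Real.rpow_nonneg hnn q) (by positivity),
        ← Real.rpow_mul hnn, mul_one_div, div_self hq0.ne', Real.rpow_one]
    have e2 : ∀ x : RHLS.Space N,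
        (ENNReal.ofReal (‖x‖ ^ (-(lam * q)))) ^ (1/(1-q)) = ENNReal.ofReal (‖x‖ ^ (-s)) := by
      intro x
      rw [ENNReal.ofReal_rpow_of_nonneg (Real.rpow_nonneg (norm_nonneg x) _) (by positivity),
        ← Real.rpow_mul (norm_nonneg x)]
      congr 1
      rw [hs]
      field_simp
    simp_rw [e1, e2]
    refine mul_le_mul' ?_ le_rfl
    exact ENNReal.rpow_le_rpow (setLIntegral_le_lintegral _ _) hq0.le
  -- combine
  have hsplit : RHLS.qnorm N q ρ
      = (∫⁻ x : RHLS.Space N in Metric.ball (0:RHLS.Space N) R, ENNReal.ofReal (ρ x ^ q))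
        + ∫⁻ x : RHLS.Space N in (Metric.ball (0:RHLS.Space N) R)ᶜ,
            ENNReal.ofReal (ρ x ^ q) :=
    (lintegral_add_compl _ measurableSet_ball).symm
  have hvol : volume (Metric.ball (0:RHLS.Space N) R)
      = ENNReal.ofReal (R ^ (N:ℕ)) * v1 := by
    have h := Measure.addHaar_ball (volume : Measure (RHLS.Space N)) (0:RHLS.Space N) hR0.le
    rwa [finrank_euclideanSpace_fin] at h
  have hTR := RHLS.tail_scaling N (s := s) hR0
  set P : ℝ := Mr ^ q * R ^ ((N:ℝ) * (1-q)) with hP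
  have hP0 : 0 < P := by positivity
  have hterm1 : M ^ q * (volume (Metric.ball (0:RHLS.Space N) R)) ^ (1-q)
      = ENNReal.ofReal P * v1 ^ (1-q) := by
    rw [hvol, ENNReal.mul_rpow_of_nonneg _ _ h1q.le, hMof,
      ENNReal.ofReal_rpow_of_nonneg hMr.le hq0.le,
      ENNReal.ofReal_rpow_of_nonneg (by positivity) h1q.le,
      ← mul_assoc, ← ENNReal.ofReal_mul (by positivity)]
    congr 2
    rw [hP, ← Real.rpow_natCast R N, ← Real.rpow_mul hR0.le]
  have hterm2 : E ^ q * (ENNReal.ofReal (R ^ ((N:ℝ) - s)) * T1) ^ (1-q)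
      = ENNReal.ofReal P * T1 ^ (1-q) := by
    rw [ENNReal.mul_rpow_of_nonneg _ _ h1q.le, hEof,
      ENNReal.ofReal_rpow_of_nonneg hEr.le hq0.le,
      ENNReal.ofReal_rpow_of_nonneg (by positivity) h1q.le,
      ← mul_assoc, ← ENNReal.ofReal_mul (by positivity)]
    congr 2
    have hexp : lam * q + ((N:ℝ) - s) * (1 - q) = (N:ℝ) * (1 - q) := by
      rw [hs]
      field_simp
      ring
    rw [hEMR, Real.mul_rpow hMr.le (Real.rpow_nonneg hR0.le _),
      ← Real.rpow_mul hR0.le, ← Real.rpow_mul hR0.le, mul_assoc, ← Real.rpow_add hR0, hexp, hP]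
  have hmain : RHLS.qnorm N q ρ ≤ ENNReal.ofReal P * K0 := by
    rw [hsplit, hK0def, mul_add]
    refine add_le_add (hball.trans (le_of_eq hterm1)) ?_
    refine (htail.trans ?_)
    rw [hTR, hterm2]
  have hfinal : RHLS.qnorm N q ρ ^ (1/q) ≤ ENNReal.ofReal P ^ (1/q) * K := by
    calc RHLS.qnorm N q ρ ^ (1/q) ≤ (ENNReal.ofReal P * K0) ^ (1/q) :=
          ENNReal.rpow_le_rpow hmain (by positivity)
      _ = ENNReal.ofReal P ^ (1/q) * K := by
          rw [ENNReal.mul_rpow_of_nonneg _ _ (by positivity), hKdef]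
  have e1 : P ^ (1/q) = Mr * R ^ ((N:ℝ) * (1-q) / q) := by
    rw [hP, Real.mul_rpow (by positivity) (by positivity),
      ← Real.rpow_mul hMr.le, ← Real.rpow_mul hR0.le,
      mul_one_div, div_self hq0.ne', Real.rpow_one, mul_one_div]
  have e2 : Mr ^ (1-θ) * Er ^ θ = Mr * R ^ ((N:ℝ) * (1-q) / q) := by
    have hexp2 : lam * θ = (N:ℝ) * (1 - q) / q := by
      rw [hθ]
      field_simp
    rw [hEMR, Real.mul_rpow hMr.le (Real.rpow_nonneg hR0.le _), ← mul_assoc,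
      ← Real.rpow_add hMr, sub_add_cancel, Real.rpow_one, ← Real.rpow_mul hR0.le, hexp2]
  have hPq : ENNReal.ofReal P ^ (1/q) = M ^ (1-θ) * E ^ θ := by
    rw [hMof, hEof, ENNReal.ofReal_rpow_of_nonneg hMr.le (by linarith),
      ENNReal.ofReal_rpow_of_nonneg hEr.le hθ0.le,
      ENNReal.ofReal_rpow_of_nonneg hP0.le (by positivity),
      ← ENNReal.ofReal_mul (by positivity)]
    congr 1
    rw [e1, e2]
  have hcK : ENNReal.ofReal (K.toReal)⁻¹ * K = 1 := by
    rw [ENNReal.ofReal_inv_of_pos hKr, ENNReal.ofReal_toReal hKt]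
    exact ENNReal.inv_mul_cancel hK0' hKt
  calc ENNReal.ofReal (K.toReal)⁻¹ * RHLS.qnorm N q ρ ^ (1/q)
      ≤ ENNReal.ofReal (K.toReal)⁻¹ * (ENNReal.ofReal P ^ (1/q) * K) :=
        mul_le_mul_right hfinal _
    _ = (ENNReal.ofReal (K.toReal)⁻¹ * K) * ENNReal.ofReal P ^ (1/q) := by ring
    _ = ENNReal.ofReal P ^ (1/q) := by rw [hcK, one_mul]
    _ = M ^ (1-θ) * E ^ θ := hPq
end
end

section
/- Let N ≥ 1 be an integer, λ > 0 and 0 < q < 1. Then the relaxed optimal constant coincides with the original one: C^rel_{N,λ,q} = C_{N,λ,q}. -/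
open MeasureTheory ENNReal Filter Topology

noncomputable section

namespace RHLSAux
open RHLS Metric

variable {N : ℕ}

lemma real_rpow_add_le {a b p : ℝ} (ha : 0 ≤ a) (hb : 0 ≤ b) (hp0 : 0 ≤ p) (hp1 : p ≤ 1) :
    (a + b) ^ p ≤ a ^ p + b ^ p := by
  have h := NNReal.rpow_add_le_add_rpow a.toNNReal b.toNNReal hp0 hp1
  have h2 := (NNReal.coe_le_coe).2 h
  simpa [NNReal.coe_rpow, Real.coe_toNNReal a ha, Real.coe_toNNReal b hb] using h2

lemma eps_bound {a ε lam : ℝ} (ha : 0 ≤ a) (hε : 0 < ε) (hlam : 0 < lam) :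
    (a + ε) ^ lam ≤ (1 + Real.sqrt ε) ^ lam * a ^ lam + (Real.sqrt ε + ε) ^ lam := by
  have hs : 0 < Real.sqrt ε := Real.sqrt_pos.2 hε
  rcases le_total a (Real.sqrt ε) with h | h
  · have h1 : (a + ε) ^ lam ≤ (Real.sqrt ε + ε) ^ lam :=
      Real.rpow_le_rpow (by positivity) (by linarith) hlam.le
    have h2 : 0 ≤ (1 + Real.sqrt ε) ^ lam * a ^ lam := by positivity
    linarith
  · have hss : Real.sqrt ε * Real.sqrt ε = ε := Real.mul_self_sqrt hε.le
    have key : a + ε ≤ (1 + Real.sqrt ε) * a := by nlinarith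
    calc (a + ε) ^ lam ≤ ((1 + Real.sqrt ε) * a) ^ lam :=
          Real.rpow_le_rpow (by positivity) key hlam.le
      _ = (1 + Real.sqrt ε) ^ lam * a ^ lam := Real.mul_rpow (by positivity) ha
      _ ≤ _ := le_add_of_nonneg_right (by positivity)

lemma mass_ne_zero {q : ℝ} {ρ : Space N → ℝ} (h : Adm N q ρ) : mass N ρ ≠ 0 := by
  intro h0
  rw [mass, lintegral_eq_zero_iff h.1.ennreal_ofReal] at h0
  exact h.2.2.2.2 (h0.mono fun x hx => by
    have := ENNReal.ofReal_eq_zero.1 hx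
    have := h.2.1 x
    simpa using le_antisymm ‹ρ x ≤ 0› ‹0 ≤ ρ x›)

lemma qnorm_ne_zero {q : ℝ} (hq0 : 0 < q) {ρ : Space N → ℝ} (h : Adm N q ρ) :
    qnorm N q ρ ≠ 0 := by
  intro h0
  have hm : Measurable fun x => ENNReal.ofReal (ρ x ^ q) :=
    (h.1.pow measurable_const).ennreal_ofReal
  rw [qnorm, lintegral_eq_zero_iff hm] at h0
  exact h.2.2.2.2 (h0.mono fun x hx => by
    have h1 : ρ x ^ q ≤ 0 := ENNReal.ofReal_eq_zero.1 hx
    have h2 : 0 ≤ ρ x ^ q := Real.rpow_nonneg (h.2.1 x) q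
    have h3 : ρ x ^ q = 0 := le_antisymm h1 h2
    have := (Real.rpow_eq_zero (h.2.1 x) (ne_of_gt hq0)).1 h3
    simpa using this)

lemma beta_eq (hN : 1 ≤ N) {lam q : ℝ} (hq0 : 0 < q) (hq1 : q < 1) :
    (2 - alpha N lam q) / q = lam / (N * (1 - q)) := by
  have hN0 : (N : ℝ) ≠ 0 := Nat.cast_ne_zero.2 (by omega)
  have h1 : (1 : ℝ) - q ≠ 0 := by linarith
  unfold alpha
  field_simp
  ring

lemma beta_pos (hN : 1 ≤ N) {lam q : ℝ} (hlam : 0 < lam) (hq0 : 0 < q) (hq1 : q < 1) :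
    0 < (2 - alpha N lam q) / q := by
  rw [beta_eq hN hq0 hq1]
  have hN0 : (0 : ℝ) < N := by exact_mod_cast Nat.pos_of_ne_zero (by omega)
  exact div_pos hlam (mul_pos hN0 (by linarith))

lemma Qrel_zero (lam q : ℝ) (ρ : Space N → ℝ) : Qrel N lam q ρ 0 = Qfun N lam q ρ := by
  simp [Qrel, Qfun, denom]

/-- The bump added to `ρ`. -/
def rhoeps (N : ℕ) (M ε : ℝ) (ρ : Space N → ℝ) : Space N → ℝ := fun x =>
  ρ x + (Metric.ball (0 : Space N) ε).indicator
    (fun _ => M / (volume (Metric.ball (0 : Space N) ε)).toReal) x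


section Bump
variable {M ε : ℝ} {ρ : Space N → ℝ}

lemma ball_vol_pos (hε : 0 < ε) : 0 < volume (Metric.ball (0 : Space N) ε) :=
  measure_ball_pos volume 0 hε

lemma ball_vol_ne_top : volume (Metric.ball (0 : Space N) ε) ≠ ⊤ :=
  measure_ball_lt_top.ne

lemma cv_eq (hM : 0 ≤ M) (hε : 0 < ε) :
    ENNReal.ofReal (M / (volume (Metric.ball (0 : Space N) ε)).toReal) *
      volume (Metric.ball (0 : Space N) ε) = ENNReal.ofReal M := by
  set v := volume (Metric.ball (0 : Space N) ε) with hv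
  have h1 : v ≠ ⊤ := ball_vol_ne_top
  have h2 : 0 < v.toReal := ENNReal.toReal_pos (ball_vol_pos hε).ne' h1
  nth_rewrite 2 [← ENNReal.ofReal_toReal h1]
  rw [← ENNReal.ofReal_mul (div_nonneg hM ENNReal.toReal_nonneg),
    div_mul_cancel₀ _ h2.ne']

lemma bump_lintegral (hM : 0 ≤ M) (hε : 0 < ε) :
    ∫⁻ x, (Metric.ball (0 : Space N) ε).indicator
      (fun _ => ENNReal.ofReal (M / (volume (Metric.ball (0 : Space N) ε)).toReal)) x
      = ENNReal.ofReal M := by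
  rw [lintegral_indicator measurableSet_ball, setLIntegral_const]
  exact cv_eq hM hε

lemma ofReal_indicator_eq (s : Set (Space N)) (c : ℝ) (x : Space N) :
    ENNReal.ofReal (s.indicator (fun _ => c) x) = s.indicator (fun _ => ENNReal.ofReal c) x := by
  by_cases hx : x ∈ s <;> simp [hx]

lemma rhoeps_split (hρ0 : 0 ≤ ρ) (hM : 0 ≤ M) (x : Space N) :
    ENNReal.ofReal (rhoeps N M ε ρ x) =
      ENNReal.ofReal (ρ x) + (Metric.ball (0 : Space N) ε).indicator
        (fun _ => ENNReal.ofReal (M / (volume (Metric.ball (0 : Space N) ε)).toReal)) x := by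
  rw [rhoeps, ENNReal.ofReal_add (hρ0 x)
    (Set.indicator_nonneg (fun _ _ => div_nonneg hM ENNReal.toReal_nonneg) x),
    ofReal_indicator_eq]

lemma mass_rhoeps (hmeas : Measurable ρ) (hρ0 : 0 ≤ ρ) (hM : 0 ≤ M) (hε : 0 < ε) :
    mass N (rhoeps N M ε ρ) = mass N ρ + ENNReal.ofReal M := by
  unfold mass
  simp only [rhoeps_split hρ0 hM]
  rw [lintegral_add_left hmeas.ennreal_ofReal, bump_lintegral hM hε]

lemma qnorm_rhoeps_ge {q : ℝ} (hq0 : 0 < q) (hρ0 : 0 ≤ ρ) (hM : 0 ≤ M) :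
    qnorm N q ρ ≤ qnorm N q (rhoeps N M ε ρ) := by
  refine lintegral_mono fun x => ENNReal.ofReal_le_ofReal ?_
  refine Real.rpow_le_rpow (hρ0 x) (le_add_of_nonneg_right ?_) hq0.le
  exact Set.indicator_nonneg (fun _ _ => div_nonneg hM ENNReal.toReal_nonneg) x

lemma qnorm_rhoeps_lt_top {q : ℝ} (hq0 : 0 < q) (hq1 : q < 1) (hmeas : Measurable ρ)
    (hρ0 : 0 ≤ ρ) (hM : 0 ≤ M) (hε : 0 < ε) (hq : qnorm N q ρ < ⊤) :
    qnorm N q (rhoeps N M ε ρ) < ⊤ := by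
  set c := M / (volume (Metric.ball (0 : Space N) ε)).toReal with hc
  have hc0 : 0 ≤ c := div_nonneg hM ENNReal.toReal_nonneg
  have hbound : ∀ x, ENNReal.ofReal (rhoeps N M ε ρ x ^ q) ≤
      ENNReal.ofReal (ρ x ^ q) + (Metric.ball (0 : Space N) ε).indicator
        (fun _ => ENNReal.ofReal (c ^ q)) x := by
    intro x
    by_cases hx : x ∈ Metric.ball (0 : Space N) ε
    · rw [Set.indicator_of_mem hx]
      calc ENNReal.ofReal (rhoeps N M ε ρ x ^ q)
          = ENNReal.ofReal ((ρ x + c) ^ q) := by rw [rhoeps, Set.indicator_of_mem hx]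
        _ ≤ ENNReal.ofReal (ρ x ^ q + c ^ q) :=
            ENNReal.ofReal_le_ofReal (real_rpow_add_le (hρ0 x) hc0 hq0.le hq1.le)
        _ = _ := ENNReal.ofReal_add (Real.rpow_nonneg (hρ0 x) q) (Real.rpow_nonneg hc0 q)
    · rw [Set.indicator_of_notMem hx]
      simp [rhoeps, Set.indicator_of_notMem hx]
  calc qnorm N q (rhoeps N M ε ρ)
      ≤ qnorm N q ρ + ENNReal.ofReal (c ^ q) * volume (Metric.ball (0 : Space N) ε) := by
        refine le_trans (lintegral_mono hbound) ?_
        rw [lintegral_add_left (hmeas.pow measurable_const).ennreal_ofReal,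
          lintegral_indicator measurableSet_ball, setLIntegral_const]
        exact le_rfl
    _ < ⊤ := ENNReal.add_lt_top.2
        ⟨hq, ENNReal.mul_lt_top ENNReal.ofReal_lt_top measure_ball_lt_top⟩

lemma adm_rhoeps {q : ℝ} (hq0 : 0 < q) (hq1 : q < 1) (hAdm : Adm N q ρ) (hM : 0 ≤ M)
    (hε : 0 < ε) : Adm N q (rhoeps N M ε ρ) := by
  obtain ⟨hmeas, hρ0, hmass, hq, hne⟩ := hAdm
  have hind0 : ∀ x, 0 ≤ (Metric.ball (0 : Space N) ε).indicator
      (fun _ => M / (volume (Metric.ball (0 : Space N) ε)).toReal) x :=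
    fun x => Set.indicator_nonneg (fun _ _ => div_nonneg hM ENNReal.toReal_nonneg) x
  refine ⟨Measurable.add hmeas (measurable_const.indicator measurableSet_ball),
    fun x => add_nonneg (hρ0 x) (hind0 x), ?_,
    qnorm_rhoeps_lt_top hq0 hq1 hmeas hρ0 hM hε hq, ?_⟩
  · rw [mass_rhoeps hmeas hρ0 hM hε]
    exact ENNReal.add_lt_top.2 ⟨hmass, ENNReal.ofReal_lt_top⟩
  · intro h0
    refine hne (h0.mono fun x hx => ?_)
    have hx' : rhoeps N M ε ρ x = 0 := hx
    rw [rhoeps] at hx'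
    have h1 := hρ0 x
    have h2 := hind0 x
    simp only [Pi.zero_apply] at h1
    show ρ x = 0
    linarith

end Bump


section IBound
variable {lam M ε : ℝ} {ρ : Space N → ℝ}

lemma Ibound (hlam : 0 < lam) (hmeas : Measurable ρ) (hρ0 : 0 ≤ ρ) (hM : 0 ≤ M)
    (hε : 0 < ε) (hmass : mass N ρ < ⊤) (hmom : mom N lam ρ < ⊤) :
    I N lam (rhoeps N M ε ρ) ≤
      I N lam ρ + 2 * (ENNReal.ofReal M *
        (ENNReal.ofReal ((1 + Real.sqrt ε) ^ lam) * mom N lam ρ +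
          ENNReal.ofReal ((Real.sqrt ε + ε) ^ lam) * mass N ρ)) +
        ENNReal.ofReal ((2 * ε) ^ lam) * ENNReal.ofReal M ^ 2 := by
  set A := ENNReal.ofReal ((1 + Real.sqrt ε) ^ lam) * mom N lam ρ +
      ENNReal.ofReal ((Real.sqrt ε + ε) ^ lam) * mass N ρ with hA
  set B := Metric.ball (0 : Space N) ε with hB
  set c := M / (volume B).toReal with hc
  have hc0 : 0 ≤ c := div_nonneg hM ENNReal.toReal_nonneg
  set F : Space N → ℝ≥0∞ := fun x => ENNReal.ofReal (ρ x) with hF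
  set G : Space N → ℝ≥0∞ := fun x => B.indicator (fun _ => ENNReal.ofReal c) x with hG
  set b : Space N → ℝ := fun x =>
    (1 + Real.sqrt ε) ^ lam * ‖x‖ ^ lam + (Real.sqrt ε + ε) ^ lam with hb
  have hFmeas : Measurable F := hmeas.ennreal_ofReal
  have hGmeas : Measurable G := measurable_const.indicator measurableSet_ball
  have hbmeas : Measurable b := by
    rw [hb]
    exact (((measurable_norm.pow measurable_const).const_mul _).add_const _)
  have hGtop : ∀ x, G x ≠ ⊤ := by
    intro x; rw [hG]; by_cases hx : x ∈ B <;> simp [hx]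
  have hGint : ∫⁻ x, G x = ENNReal.ofReal M := by
    simp only [hG, hB, hc]
    exact bump_lintegral hM hε
  have hAtop : A ≠ ⊤ := by
    rw [hA]
    exact ENNReal.add_ne_top.2 ⟨ENNReal.mul_ne_top ENNReal.ofReal_ne_top hmom.ne,
      ENNReal.mul_ne_top ENNReal.ofReal_ne_top hmass.ne⟩
  -- integral of b against ρ
  have hbF : ∫⁻ y, ENNReal.ofReal (b y) * F y = A := by
    have heq : ∀ y : Space N, ENNReal.ofReal (b y) * F y =
        ENNReal.ofReal ((1 + Real.sqrt ε) ^ lam) * ENNReal.ofReal (‖y‖ ^ lam * ρ y) +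
          ENNReal.ofReal ((Real.sqrt ε + ε) ^ lam) * ENNReal.ofReal (ρ y) := by
      intro y
      have h1 : (0:ℝ) ≤ (1 + Real.sqrt ε) ^ lam := by positivity
      have h2 : (0:ℝ) ≤ (Real.sqrt ε + ε) ^ lam := by positivity
      have h3 : (0:ℝ) ≤ ‖y‖ ^ lam * ρ y :=
        mul_nonneg (Real.rpow_nonneg (norm_nonneg y) lam) (hρ0 y)
      rw [hF, hb, ← ENNReal.ofReal_mul h1, ← ENNReal.ofReal_mul h2,
        ← ENNReal.ofReal_add (by positivity) (mul_nonneg h2 (hρ0 y)),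
        ← ENNReal.ofReal_mul (by positivity)]
      congr 1
      ring
    simp only [heq]
    rw [lintegral_add_left (f := fun y : Space N =>
        ENNReal.ofReal ((1 + Real.sqrt ε) ^ lam) * ENNReal.ofReal (‖y‖ ^ lam * ρ y))
      (((measurable_norm.pow measurable_const).mul hmeas).ennreal_ofReal.const_mul _),
      lintegral_const_mul _ (f := fun y : Space N => ENNReal.ofReal (‖y‖ ^ lam * ρ y))
        ((measurable_norm.pow measurable_const).mul hmeas).ennreal_ofReal,
      lintegral_const_mul _ hmeas.ennreal_ofReal]
    rw [hA, mom, mass]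
  have hbF2 : ∫⁻ y, F y * ENNReal.ofReal (b y) = A := by
    rw [← hbF]; exact lintegral_congr fun y => mul_comm _ _
  -- pointwise kernel bounds
  have hK1 : ∀ x y : Space N, x ∈ B →
      ENNReal.ofReal (‖x - y‖ ^ lam) ≤ ENNReal.ofReal (b y) := by
    intro x y hx
    apply ENNReal.ofReal_le_ofReal
    have hxn : ‖x‖ < ε := by rwa [hB, mem_ball_zero_iff] at hx
    have h1 : ‖x - y‖ ≤ ‖y‖ + ε := by
      have h2 := norm_sub_le x y
      linarith
    calc ‖x - y‖ ^ lam ≤ (‖y‖ + ε) ^ lam := Real.rpow_le_rpow (norm_nonneg _) h1 hlam.le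
      _ ≤ b y := by rw [hb]; exact eps_bound (norm_nonneg y) hε hlam
  have hK2 : ∀ x y : Space N, y ∈ B →
      ENNReal.ofReal (‖x - y‖ ^ lam) ≤ ENNReal.ofReal (b x) := by
    intro x y hy
    apply ENNReal.ofReal_le_ofReal
    have hyn : ‖y‖ < ε := by rwa [hB, mem_ball_zero_iff] at hy
    have h1 : ‖x - y‖ ≤ ‖x‖ + ε := by
      have h2 := norm_sub_le x y
      linarith
    calc ‖x - y‖ ^ lam ≤ (‖x‖ + ε) ^ lam := Real.rpow_le_rpow (norm_nonneg _) h1 hlam.le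
      _ ≤ b x := by rw [hb]; exact eps_bound (norm_nonneg x) hε hlam
  have hK3 : ∀ x y : Space N, x ∈ B → y ∈ B →
      ENNReal.ofReal (‖x - y‖ ^ lam) ≤ ENNReal.ofReal ((2 * ε) ^ lam) := by
    intro x y hx hy
    apply ENNReal.ofReal_le_ofReal
    have hxn : ‖x‖ < ε := by rwa [hB, mem_ball_zero_iff] at hx
    have hyn : ‖y‖ < ε := by rwa [hB, mem_ball_zero_iff] at hy
    refine Real.rpow_le_rpow (norm_nonneg _) ?_ hlam.le
    have h2 := norm_sub_le x y
    linarith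
  -- pointwise bound on the integrand
  have hpt : ∀ x y : Space N,
      (F x + G x) * ENNReal.ofReal (‖x - y‖ ^ lam) * (F y + G y) ≤
        F x * ENNReal.ofReal (‖x - y‖ ^ lam) * F y +
          (F x * ENNReal.ofReal (b x) * G y +
            (G x * (ENNReal.ofReal (b y) * F y) +
              G x * (ENNReal.ofReal ((2 * ε) ^ lam) * G y))) := by
    intro x y
    have hexp : (F x + G x) * ENNReal.ofReal (‖x - y‖ ^ lam) * (F y + G y) =
        F x * ENNReal.ofReal (‖x - y‖ ^ lam) * F y +
          (F x * ENNReal.ofReal (‖x - y‖ ^ lam) * G y +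
            (G x * ENNReal.ofReal (‖x - y‖ ^ lam) * F y +
              G x * ENNReal.ofReal (‖x - y‖ ^ lam) * G y)) := by ring
    rw [hexp]
    refine add_le_add le_rfl (add_le_add ?_ (add_le_add ?_ ?_))
    · by_cases hy : y ∈ B
      · exact mul_le_mul_left (mul_le_mul_right (hK2 x y hy) (F x)) (G y)
      · simp [hG, Set.indicator_of_notMem hy]
    · by_cases hx : x ∈ B
      · rw [mul_assoc]
        exact mul_le_mul_right (mul_le_mul_left (hK1 x y hx) (F y)) (G x)
      · simp [hG, Set.indicator_of_notMem hx]
    · by_cases hx : x ∈ B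
      · by_cases hy : y ∈ B
        · rw [mul_assoc]
          exact mul_le_mul_right (mul_le_mul_left (hK3 x y hx hy) (G y)) (G x)
        · simp [hG, Set.indicator_of_notMem hy]
      · simp [hG, Set.indicator_of_notMem hx]
  -- inner integral computation
  have hinner : ∀ x : Space N,
      ∫⁻ y, (F x * ENNReal.ofReal (‖x - y‖ ^ lam) * F y +
          (F x * ENNReal.ofReal (b x) * G y +
            (G x * (ENNReal.ofReal (b y) * F y) +
              G x * (ENNReal.ofReal ((2 * ε) ^ lam) * G y)))) =
        (∫⁻ y, F x * ENNReal.ofReal (‖x - y‖ ^ lam) * F y) +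
          (F x * ENNReal.ofReal (b x) * ENNReal.ofReal M +
            (G x * A + G x * (ENNReal.ofReal ((2 * ε) ^ lam) * ENNReal.ofReal M))) := by
    intro x
    have hm1 : Measurable fun y : Space N =>
        F x * ENNReal.ofReal (‖x - y‖ ^ lam) * F y :=
      ((((measurable_const.sub measurable_id).norm.pow
        measurable_const).ennreal_ofReal.const_mul _).mul hFmeas)
    have hm2 : Measurable fun y : Space N => F x * ENNReal.ofReal (b x) * G y :=
      hGmeas.const_mul _
    have hm3 : Measurable fun y : Space N => G x * (ENNReal.ofReal (b y) * F y) :=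
      ((hbmeas.ennreal_ofReal.mul hFmeas).const_mul _)
    rw [lintegral_add_left hm1, lintegral_add_left hm2, lintegral_add_left hm3]
    congr 1
    congr 1
    · rw [lintegral_const_mul' _ _ (ENNReal.mul_ne_top ENNReal.ofReal_ne_top
        ENNReal.ofReal_ne_top), hGint]
    congr 1
    · rw [lintegral_const_mul' _ _ (hGtop x), hbF]
    · rw [lintegral_const_mul' _ _ (hGtop x),
        lintegral_const_mul' _ _ ENNReal.ofReal_ne_top, hGint]
  have hIxmeas : Measurable fun x : Space N =>
      ∫⁻ y, F x * ENNReal.ofReal (‖x - y‖ ^ lam) * F y := by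
    have : Measurable fun p : Space N × Space N =>
        F p.1 * ENNReal.ofReal (‖p.1 - p.2‖ ^ lam) * F p.2 :=
      (((hFmeas.comp measurable_fst).mul ((measurable_fst.sub
        measurable_snd).norm.pow measurable_const).ennreal_ofReal).mul
        (hFmeas.comp measurable_snd))
    exact this.lintegral_prod_right'
  calc I N lam (rhoeps N M ε ρ)
      = ∫⁻ x, ∫⁻ y, (F x + G x) * ENNReal.ofReal (‖x - y‖ ^ lam) * (F y + G y) := by
        simp only [I, hF, hG, hB, hc, rhoeps_split hρ0 hM]
    _ ≤ ∫⁻ x, ∫⁻ y, (F x * ENNReal.ofReal (‖x - y‖ ^ lam) * F y +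
          (F x * ENNReal.ofReal (b x) * G y +
            (G x * (ENNReal.ofReal (b y) * F y) +
              G x * (ENNReal.ofReal ((2 * ε) ^ lam) * G y)))) :=
        lintegral_mono fun x => lintegral_mono fun y => hpt x y
    _ = I N lam ρ + (A * ENNReal.ofReal M + (ENNReal.ofReal M * A +
          ENNReal.ofReal M * (ENNReal.ofReal ((2 * ε) ^ lam) * ENNReal.ofReal M))) := by
        rw [lintegral_congr hinner]
        have hg2meas : Measurable fun x : Space N =>
            F x * ENNReal.ofReal (b x) * ENNReal.ofReal M :=
          (hFmeas.mul hbmeas.ennreal_ofReal).mul_const _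
        have hg3meas : Measurable fun x : Space N => G x * A := hGmeas.mul_const _
        rw [lintegral_add_left hIxmeas, lintegral_add_left hg2meas,
          lintegral_add_left hg3meas]
        have e2 : ∫⁻ x, F x * ENNReal.ofReal (b x) * ENNReal.ofReal M =
            A * ENNReal.ofReal M := by
          rw [lintegral_mul_const' _ _ ENNReal.ofReal_ne_top, hbF2]
        have e3 : ∫⁻ x, G x * A = ENNReal.ofReal M * A := by
          rw [lintegral_mul_const' _ _ hAtop, hGint]
        have e4 : ∫⁻ x, G x * (ENNReal.ofReal ((2 * ε) ^ lam) * ENNReal.ofReal M) =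
            ENNReal.ofReal M * (ENNReal.ofReal ((2 * ε) ^ lam) * ENNReal.ofReal M) := by
          rw [lintegral_mul_const' _ _ (ENNReal.mul_ne_top ENNReal.ofReal_ne_top
            ENNReal.ofReal_ne_top), hGint]
        rw [e2, e3, e4]
        rfl
    _ ≤ I N lam ρ + 2 * (ENNReal.ofReal M * A) +
          ENNReal.ofReal ((2 * ε) ^ lam) * ENNReal.ofReal M ^ 2 := le_of_eq (by ring)

end IBound


section Final
variable {lam q M : ℝ} {ρ : Space N → ℝ}

lemma tendsto_sqrt_term (lam : ℝ) (hlam : 0 < lam) :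
    Tendsto (fun ε : ℝ => ENNReal.ofReal ((1 + Real.sqrt ε) ^ lam)) (𝓝[>] 0) (𝓝 1) := by
  have h : Tendsto (fun ε : ℝ => (1 + Real.sqrt ε) ^ lam) (𝓝 0) (𝓝 1) := by
    have h1 : Tendsto (fun ε : ℝ => 1 + Real.sqrt ε) (𝓝 0) (𝓝 1) := by
      have h0 := Real.continuous_sqrt.tendsto 0
      rw [Real.sqrt_zero] at h0
      simpa using tendsto_const_nhds.add h0
    have h2 : ContinuousAt (fun t : ℝ => t ^ lam) 1 :=
      Real.continuousAt_rpow_const 1 lam (Or.inl one_ne_zero)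
    have h3 := h2.tendsto.comp h1
    rwa [Real.one_rpow] at h3
  have h4 := (ENNReal.continuous_ofReal.tendsto _).comp h
  simp only [ENNReal.ofReal_one] at h4
  exact h4.mono_left nhdsWithin_le_nhds

lemma tendsto_zero_pow {f : ℝ → ℝ} (hf : Tendsto f (𝓝 0) (𝓝 0)) (lam : ℝ) (hlam : 0 < lam) :
    Tendsto (fun ε : ℝ => ENNReal.ofReal (f ε ^ lam)) (𝓝[>] 0) (𝓝 0) := by
  have h2 : ContinuousAt (fun t : ℝ => t ^ lam) 0 :=
    Real.continuousAt_rpow_const 0 lam (Or.inr hlam.le)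
  have h3 := h2.tendsto.comp hf
  rw [Real.zero_rpow hlam.ne'] at h3
  have h4 := (ENNReal.continuous_ofReal.tendsto _).comp h3
  rw [ENNReal.ofReal_zero] at h4
  exact h4.mono_left nhdsWithin_le_nhds

lemma c_le_qrel (hN : 1 ≤ N) (hlam : 0 < lam) (hq0 : 0 < q) (hq1 : q < 1)
    (hAdm : Adm N q ρ) (hM : 0 ≤ M) : C N lam q ≤ Qrel N lam q ρ M := by
  rcases eq_or_lt_of_le hM with hM0 | hMpos
  · rw [← hM0, Qrel_zero]
    exact sInf_le ⟨ρ, hAdm, rfl⟩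
  have hmeas := hAdm.1
  have hρ0 := hAdm.2.1
  have hmass := hAdm.2.2.1
  have hqn := hAdm.2.2.2.1
  have hβ : 0 < (2 - alpha N lam q) / q := beta_pos hN hlam hq0 hq1
  set D := (mass N ρ + ENNReal.ofReal M) ^ alpha N lam q *
      qnorm N q ρ ^ ((2 - alpha N lam q) / q) with hD
  have hmassne : mass N ρ ≠ 0 := mass_ne_zero hAdm
  have hqne : qnorm N q ρ ≠ 0 := qnorm_ne_zero hq0 hAdm
  have h1 : mass N ρ + ENNReal.ofReal M ≠ 0 := fun h =>
    hmassne (by simpa using (add_eq_zero.1 h).1)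
  have h2 : mass N ρ + ENNReal.ofReal M ≠ ⊤ :=
    ENNReal.add_ne_top.2 ⟨hmass.ne, ENNReal.ofReal_ne_top⟩
  have hDtop : D ≠ ⊤ := by
    rw [hD]
    apply ENNReal.mul_ne_top
    · intro h
      rcases ENNReal.rpow_eq_top_iff.1 h with ⟨h', _⟩ | ⟨h', _⟩
      exacts [h1 h', h2 h']
    · intro h
      rcases ENNReal.rpow_eq_top_iff.1 h with ⟨h', _⟩ | ⟨h', _⟩
      exacts [hqne h', hqn.ne h']
  have hDne : D ≠ 0 := by
    rw [hD]
    exact mul_ne_zero (ENNReal.rpow_pos (pos_iff_ne_zero.2 h1) h2).ne'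
      (ENNReal.rpow_pos (pos_iff_ne_zero.2 hqne) hqn.ne).ne'
  by_cases hfin : I N lam ρ < ⊤ ∧ mom N lam ρ < ⊤
  swap
  · have hnum : I N lam ρ + 2 * ENNReal.ofReal M * mom N lam ρ = ⊤ := by
      rw [not_and_or] at hfin
      simp only [not_lt, top_le_iff] at hfin
      rcases hfin with h | h
      · rw [h]; simp
      · rw [h, ENNReal.mul_top (mul_ne_zero two_ne_zero
          (ENNReal.ofReal_pos.2 hMpos).ne')]
        simp
    have hQtop : Qrel N lam q ρ M = ⊤ := by
      rw [Qrel, hnum, ← hD]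
      exact ENNReal.top_div_of_ne_top hDtop
    rw [hQtop]
    exact le_top
  obtain ⟨hI, hmom⟩ := hfin
  set g : ℝ → ℝ≥0∞ := fun ε =>
    (I N lam ρ + 2 * (ENNReal.ofReal M *
      (ENNReal.ofReal ((1 + Real.sqrt ε) ^ lam) * mom N lam ρ +
        ENNReal.ofReal ((Real.sqrt ε + ε) ^ lam) * mass N ρ)) +
      ENNReal.ofReal ((2 * ε) ^ lam) * ENNReal.ofReal M ^ 2) / D with hg
  have hle : ∀ ε : ℝ, 0 < ε → C N lam q ≤ g ε := by
    intro ε hε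
    have hadm' := adm_rhoeps hq0 hq1 hAdm hM hε
    refine le_trans (sInf_le ⟨rhoeps N M ε ρ, hadm', rfl⟩) ?_
    rw [Qfun, denom, hg]
    apply ENNReal.div_le_div (Ibound hlam hmeas hρ0 hM hε hmass hmom)
    rw [mass_rhoeps hmeas hρ0 hM hε, hD]
    exact mul_le_mul_right (ENNReal.rpow_le_rpow (qnorm_rhoeps_ge hq0 hρ0 hM) hβ.le) _
  have htend : Tendsto g (𝓝[>] (0 : ℝ)) (𝓝 (Qrel N lam q ρ M)) := by
    have hQ : Qrel N lam q ρ M =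
        (I N lam ρ + 2 * ENNReal.ofReal M * mom N lam ρ) / D := by
      rw [Qrel, hD]
    rw [hQ, hg]
    apply ENNReal.Tendsto.div_const ?_ (Or.inr hDne)
    have hsq : Tendsto (fun ε : ℝ => Real.sqrt ε + ε) (𝓝 0) (𝓝 0) := by
      have h0 := Real.continuous_sqrt.tendsto 0
      rw [Real.sqrt_zero] at h0
      simpa using h0.add (continuous_id.tendsto (0 : ℝ))
    have htw : Tendsto (fun ε : ℝ => 2 * ε) (𝓝 (0 : ℝ)) (𝓝 0) := by
      have h := (tendsto_id (x := 𝓝 (0 : ℝ))).const_mul (2 : ℝ)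
      rwa [mul_zero] at h
    have t1 := ENNReal.Tendsto.mul_const (tendsto_sqrt_term lam hlam)
      (Or.inl one_ne_zero) (b := mom N lam ρ)
    have t2 := ENNReal.Tendsto.mul_const (tendsto_zero_pow hsq lam hlam)
      (Or.inr hmass.ne) (b := mass N ρ)
    have t3 := ENNReal.Tendsto.mul_const (tendsto_zero_pow htw lam hlam)
      (Or.inr (ENNReal.pow_ne_top ENNReal.ofReal_ne_top)) (b := ENNReal.ofReal M ^ 2)
    have t4 := ENNReal.Tendsto.const_mul (a := ENNReal.ofReal M) (t1.add t2)
      (Or.inr ENNReal.ofReal_ne_top)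
    have t5 := ENNReal.Tendsto.const_mul (a := 2) t4 (Or.inr (by simp : (2 : ℝ≥0∞) ≠ ⊤))
    have t6 := (tendsto_const_nhds : Tendsto (fun _ : ℝ => I N lam ρ)
      (𝓝[>] 0) (𝓝 (I N lam ρ))).add t5
    have t7 := t6.add t3
    have heq : I N lam ρ + 2 * (ENNReal.ofReal M *
        (1 * mom N lam ρ + 0 * mass N ρ)) + 0 * ENNReal.ofReal M ^ 2 =
        I N lam ρ + 2 * ENNReal.ofReal M * mom N lam ρ := by ring
    exact heq ▸ t7
  exact ge_of_tendsto htend (eventually_nhdsWithin_of_forall fun ε hε => hle ε hε)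

end Final

end RHLSAux

/-- the relaxed optimal constant coincides with the original one. -/
theorem stmt7 (N : ℕ) (hN : 1 ≤ N) (lam q : ℝ) (hlam : 0 < lam)
    (hq0 : 0 < q) (hq1 : q < 1) :
    RHLS.Crel N lam q = RHLS.C N lam q := by
  apply le_antisymm
  · apply sInf_le_sInf
    rintro c ⟨ρ, hAdm, rfl⟩
    exact ⟨ρ, 0, hAdm, le_refl 0, (RHLSAux.Qrel_zero lam q ρ).symm⟩
  · apply le_sInf
    rintro c ⟨ρ, M, hAdm, hM, rfl⟩
    exact RHLSAux.c_le_qrel hN hlam hq0 hq1 hAdm hM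
end
end

section
/- Let N ≥ 1 be an integer. The map (λ, q) ↦ C_{N,λ,q} is upper semi-continuous on (0,∞) × (0,1): if (λ_n, q_n) → (λ, q) in (0,∞) × (0,1), then limsup_{n→∞} C_{N,λ_n,q_n} ≤ C_{N,λ,q}. -/
open MeasureTheory ENNReal Filter Topology

noncomputable section

section StmtAux

open RHLS

variable {N : ℕ}

private lemma vol_ball_lt_top (R : ℝ) : volume (Metric.closedBall (0 : Space N) R) < ⊤ :=
  measure_closedBall_lt_top

private lemma measure_ne_pos {ρ : Space N → ℝ} (hne : ¬ ρ =ᵐ[(volume : Measure (Space N))] 0) :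
    0 < volume {x | ρ x ≠ 0} := by
  rw [Filter.EventuallyEq, ae_iff] at hne
  simpa [pos_iff_ne_zero] using hne

private lemma mass_pos' {ρ : Space N → ℝ} (hm : Measurable ρ) (h0 : ∀ x, 0 ≤ ρ x)
    (hne : ¬ ρ =ᵐ[(volume : Measure (Space N))] 0) : 0 < mass N ρ := by
  rw [mass, lintegral_pos_iff_support hm.ennreal_ofReal]
  refine (measure_ne_pos hne).trans_le (measure_mono ?_)
  intro x hx
  simp only [Function.mem_support, ne_eq, ENNReal.ofReal_eq_zero, not_le]
  exact lt_of_le_of_ne (h0 x) (Ne.symm hx)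

private lemma qnorm_pos' {ρ : Space N → ℝ} {p : ℝ} (hp : 0 < p) (hm : Measurable ρ)
    (h0 : ∀ x, 0 ≤ ρ x) (hne : ¬ ρ =ᵐ[(volume : Measure (Space N))] 0) : 0 < qnorm N p ρ := by
  rw [qnorm, lintegral_pos_iff_support ((hm.pow measurable_const).ennreal_ofReal)]
  refine (measure_ne_pos hne).trans_le (measure_mono ?_)
  intro x hx
  simp only [Function.mem_support, ne_eq, ENNReal.ofReal_eq_zero, not_le]
  exact Real.rpow_pos_of_pos (lt_of_le_of_ne (h0 x) (Ne.symm hx)) p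

private lemma lint_le_ball {f : Space N → ℝ≥0∞} {c : ℝ≥0∞} {R : ℝ}
    (hfc : ∀ x, f x ≤ c) (hf0 : ∀ x : Space N, R < ‖x‖ → f x = 0) :
    ∫⁻ x, f x ≤ c * volume (Metric.closedBall (0 : Space N) R) := by
  calc ∫⁻ x, f x ≤ ∫⁻ x, (Metric.closedBall (0 : Space N) R).indicator (fun _ => c) x := by
        refine lintegral_mono fun x => ?_
        by_cases hx : x ∈ Metric.closedBall (0 : Space N) R
        · simpa [hx] using hfc x
        · have : R < ‖x‖ := by
            simpa [Metric.mem_closedBall, dist_zero_right, not_le] using hx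
          simp [hx, hf0 x this]
    _ = c * volume (Metric.closedBall (0 : Space N) R) := by
        rw [lintegral_indicator measurableSet_closedBall _, setLIntegral_const]

private lemma rpow_le_max {b c p L : ℝ} (hb : 0 ≤ b) (hbc : b ≤ c) (hp : 0 ≤ p) (hpL : p ≤ L) :
    b ^ p ≤ max 1 (c ^ L) := by
  rcases le_or_gt b 1 with h | h
  · exact le_max_of_le_left (Real.rpow_le_one hb h hp)
  · exact le_max_of_le_right <|
      (Real.rpow_le_rpow_of_exponent_le h.le hpL).trans
        (Real.rpow_le_rpow hb hbc (hp.trans hpL))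

private lemma rpow_le_one_add {b p K : ℝ} (hb : 0 ≤ b) (hbK : b ≤ K) (hp0 : 0 ≤ p)
    (hp1 : p ≤ 1) : b ^ p ≤ 1 + K := by
  rcases le_or_gt b 1 with h | h
  · have := Real.rpow_le_one hb h hp0
    have hK : 0 ≤ K := hb.trans hbK
    linarith
  · have h1 : b ^ p ≤ b ^ (1 : ℝ) := Real.rpow_le_rpow_of_exponent_le h.le hp1
    rw [Real.rpow_one] at h1
    linarith

private lemma qnorm_le_ball {ρ : Space N → ℝ} {K R p : ℝ} (h0 : ∀ x, 0 ≤ ρ x)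
    (hK : ∀ x, ρ x ≤ K) (hsupp : ∀ x : Space N, R < ‖x‖ → ρ x = 0) (hp0 : 0 < p) (hp1 : p ≤ 1) :
    qnorm N p ρ ≤ ENNReal.ofReal (1 + K) * volume (Metric.closedBall (0 : Space N) R) :=
  lint_le_ball
    (fun x => ENNReal.ofReal_le_ofReal (rpow_le_one_add (h0 x) (hK x) hp0.le hp1))
    (fun x hx => by simp [hsupp x hx, Real.zero_rpow hp0.ne'])

private lemma mass_le_ball {ρ : Space N → ℝ} {K R : ℝ} (hK : ∀ x, ρ x ≤ K)
    (hsupp : ∀ x : Space N, R < ‖x‖ → ρ x = 0) :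
    mass N ρ ≤ ENNReal.ofReal (1 + K) * volume (Metric.closedBall (0 : Space N) R) :=
  lint_le_ball (fun x => ENNReal.ofReal_le_ofReal (by linarith [hK x]))
    (fun x hx => by simp [hsupp x hx])

private lemma I_ptwise {ρ : Space N → ℝ} {R L p : ℝ}
    (hsupp : ∀ x : Space N, R < ‖x‖ → ρ x = 0) (hp0 : 0 < p) (hpL : p ≤ L) (x y : Space N) :
    ENNReal.ofReal (ρ x) * ENNReal.ofReal (‖x - y‖ ^ p) * ENNReal.ofReal (ρ y) ≤
      ENNReal.ofReal (ρ x) * ENNReal.ofReal (max 1 ((2 * R) ^ L)) * ENNReal.ofReal (ρ y) := by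
  by_cases hx : ρ x = 0
  · simp [hx]
  by_cases hy : ρ y = 0
  · simp [hy]
  have hxR : ‖x‖ ≤ R := by by_contra h; exact hx (hsupp x (not_le.mp h))
  have hyR : ‖y‖ ≤ R := by by_contra h; exact hy (hsupp y (not_le.mp h))
  have hxy : ‖x - y‖ ≤ 2 * R := by
    calc ‖x - y‖ ≤ ‖x‖ + ‖y‖ := norm_sub_le x y
      _ ≤ 2 * R := by linarith
  exact mul_le_mul' (mul_le_mul' le_rfl
    (ENNReal.ofReal_le_ofReal (rpow_le_max (norm_nonneg _) hxy hp0.le hpL))) le_rfl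

private lemma meas_integrand {ρ : Space N → ℝ} (hm : Measurable ρ) (p : ℝ) :
    Measurable (fun z : Space N × Space N =>
      ENNReal.ofReal (ρ z.1) * ENNReal.ofReal (‖z.1 - z.2‖ ^ p) * ENNReal.ofReal (ρ z.2)) :=
  ((hm.comp measurable_fst).ennreal_ofReal.mul
    ((((measurable_fst.sub measurable_snd).norm).pow measurable_const).ennreal_ofReal)).mul
    (hm.comp measurable_snd).ennreal_ofReal

private lemma inner_le {ρ : Space N → ℝ} {R L p : ℝ}
    (hsupp : ∀ x : Space N, R < ‖x‖ → ρ x = 0) (hp0 : 0 < p) (hpL : p ≤ L) (x : Space N) :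
    (∫⁻ y, ENNReal.ofReal (ρ x) * ENNReal.ofReal (‖x - y‖ ^ p) * ENNReal.ofReal (ρ y)) ≤
      ENNReal.ofReal (ρ x) * (ENNReal.ofReal (max 1 ((2 * R) ^ L)) * mass N ρ) := by
  calc (∫⁻ y, ENNReal.ofReal (ρ x) * ENNReal.ofReal (‖x - y‖ ^ p) * ENNReal.ofReal (ρ y))
      ≤ ∫⁻ y, ENNReal.ofReal (ρ x) * ENNReal.ofReal (max 1 ((2 * R) ^ L)) *
          ENNReal.ofReal (ρ y) := lintegral_mono fun y => I_ptwise hsupp hp0 hpL x y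
    _ = ENNReal.ofReal (ρ x) * ENNReal.ofReal (max 1 ((2 * R) ^ L)) * mass N ρ :=
        lintegral_const_mul' _ _ (ENNReal.mul_ne_top ENNReal.ofReal_ne_top ENNReal.ofReal_ne_top)
    _ = _ := by rw [mul_assoc]

private lemma tendsto_I {lam : ℝ} (hlam : 0 < lam) {u : ℕ → ℝ} (hu : ∀ n, 0 < u n)
    (hul : Tendsto u atTop (𝓝 lam)) {ρ : Space N → ℝ} {K R : ℝ}
    (hmeas : Measurable ρ) (hK : ∀ x, ρ x ≤ K)
    (hsupp : ∀ x : Space N, R < ‖x‖ → ρ x = 0) :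
    Tendsto (fun n => I N (u n) ρ) atTop (𝓝 (I N lam ρ)) := by
  have hDne : (ENNReal.ofReal (max 1 ((2 * R) ^ (lam + 1)))) ≠ ⊤ := ENNReal.ofReal_ne_top
  have hmassfin : mass N ρ ≠ ⊤ := ((mass_le_ball hK hsupp).trans_lt
    (ENNReal.mul_lt_top ENNReal.ofReal_lt_top (vol_ball_lt_top R))).ne
  have hev : ∀ᶠ n in atTop, u n ≤ lam + 1 :=
    hul.eventually_le_const (by linarith)
  refine tendsto_lintegral_filter_of_dominated_convergence
      (fun x => ENNReal.ofReal (ρ x) *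
        (ENNReal.ofReal (max 1 ((2 * R) ^ (lam + 1))) * mass N ρ)) ?_ ?_ ?_ ?_
  · exact Eventually.of_forall fun n => (meas_integrand hmeas (u n)).lintegral_prod_right'
  · filter_upwards [hev] with n hn
    exact ae_of_all _ fun x => inner_le hsupp (hu n) hn x
  · rw [lintegral_mul_const' _ _ (ENNReal.mul_ne_top hDne hmassfin)]
    exact ENNReal.mul_ne_top hmassfin (ENNReal.mul_ne_top hDne hmassfin)
  · refine ae_of_all _ fun x => ?_
    refine tendsto_lintegral_filter_of_dominated_convergence
        (fun y => ENNReal.ofReal (ρ x) * ENNReal.ofReal (max 1 ((2 * R) ^ (lam + 1))) *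
          ENNReal.ofReal (ρ y)) ?_ ?_ ?_ ?_
    · refine Eventually.of_forall fun n => ?_
      exact (measurable_const.mul
        ((((measurable_const.sub measurable_id).norm).pow measurable_const).ennreal_ofReal)).mul
        hmeas.ennreal_ofReal
    · filter_upwards [hev] with n hn
      exact ae_of_all _ fun y => I_ptwise hsupp (hu n) hn x y
    · rw [lintegral_const_mul' _ _
        (ENNReal.mul_ne_top ENNReal.ofReal_ne_top ENNReal.ofReal_ne_top)]
      exact ENNReal.mul_ne_top (ENNReal.mul_ne_top ENNReal.ofReal_ne_top hDne) hmassfin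
    · refine ae_of_all _ fun y => ?_
      have h1 : Tendsto (fun n => ‖x - y‖ ^ u n) atTop (𝓝 (‖x - y‖ ^ lam)) :=
        Filter.Tendsto.rpow tendsto_const_nhds hul (Or.inr hlam)
      exact ENNReal.Tendsto.mul_const
        (ENNReal.Tendsto.const_mul (ENNReal.tendsto_ofReal h1) (Or.inr ENNReal.ofReal_ne_top))
        (Or.inr ENNReal.ofReal_ne_top)

private lemma tendsto_qnorm {q : ℝ} (hq0 : 0 < q) {v : ℕ → ℝ} (hv : ∀ n, 0 < v n ∧ v n < 1)
    (hvl : Tendsto v atTop (𝓝 q)) {ρ : Space N → ℝ} {K R : ℝ}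
    (hmeas : Measurable ρ) (h0 : ∀ x, 0 ≤ ρ x) (hK : ∀ x, ρ x ≤ K)
    (hsupp : ∀ x : Space N, R < ‖x‖ → ρ x = 0) :
    Tendsto (fun n => qnorm N (v n) ρ) atTop (𝓝 (qnorm N q ρ)) := by
  refine tendsto_lintegral_filter_of_dominated_convergence
      ((Metric.closedBall (0 : Space N) R).indicator fun _ => ENNReal.ofReal (1 + K)) ?_ ?_ ?_ ?_
  · exact Eventually.of_forall fun n => (hmeas.pow measurable_const).ennreal_ofReal
  · refine Eventually.of_forall fun n => ae_of_all _ fun x => ?_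
    by_cases hx : x ∈ Metric.closedBall (0 : Space N) R
    · rw [Set.indicator_of_mem hx]
      exact ENNReal.ofReal_le_ofReal (rpow_le_one_add (h0 x) (hK x) (hv n).1.le (hv n).2.le)
    · have : R < ‖x‖ := by simpa [Metric.mem_closedBall, dist_zero_right, not_le] using hx
      simp [Set.indicator_of_notMem hx, hsupp x this, Real.zero_rpow (hv n).1.ne']
  · rw [lintegral_indicator measurableSet_closedBall _, setLIntegral_const]
    exact (ENNReal.mul_lt_top ENNReal.ofReal_lt_top (vol_ball_lt_top R)).ne
  · exact ae_of_all _ fun x =>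
      ENNReal.tendsto_ofReal (Filter.Tendsto.rpow tendsto_const_nhds hvl (Or.inr hq0))

private lemma tendsto_alpha (hN : 1 ≤ N) {lam q : ℝ} (hq1 : q < 1)
    {u v : ℕ → ℝ} (hul : Tendsto u atTop (𝓝 lam)) (hvl : Tendsto v atTop (𝓝 q)) :
    Tendsto (fun n => alpha N (u n) (v n)) atTop (𝓝 (alpha N lam q)) := by
  have hNpos : (0 : ℝ) < N := by exact_mod_cast hN
  have hNne : ((N : ℝ) * (1 - q)) ≠ 0 := by
    have h1 : (0:ℝ) < 1 - q := by linarith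
    positivity
  simp only [alpha]
  exact (tendsto_const_nhds.sub (hvl.mul (tendsto_const_nhds.add hul))).div
    (tendsto_const_nhds.mul (tendsto_const_nhds.sub hvl)) hNne

private lemma limsup_le_Q (hN : 1 ≤ N) {lam q : ℝ} (hlam : 0 < lam)
    (hq0 : 0 < q) (hq1 : q < 1) {u v : ℕ → ℝ} (hu : ∀ n, 0 < u n) (hv : ∀ n, 0 < v n ∧ v n < 1)
    (hul : Tendsto u atTop (𝓝 lam)) (hvl : Tendsto v atTop (𝓝 q))
    {ρ : Space N → ℝ} {K R : ℝ} (hmeas : Measurable ρ) (h0 : ∀ x, 0 ≤ ρ x) (hK : ∀ x, ρ x ≤ K)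
    (hsupp : ∀ x : Space N, R < ‖x‖ → ρ x = 0)
    (hne : ¬ ρ =ᵐ[(volume : Measure (Space N))] 0) :
    Filter.limsup (fun n => C N (u n) (v n)) atTop ≤ Qfun N lam q ρ := by
  have hballfin := vol_ball_lt_top (N := N) R
  have hmassfin : mass N ρ ≠ ⊤ :=
    ((mass_le_ball hK hsupp).trans_lt
      (ENNReal.mul_lt_top ENNReal.ofReal_lt_top hballfin)).ne
  have hmasspos := mass_pos' hmeas h0 hne
  have hqfin : ∀ p : ℝ, 0 < p → p ≤ 1 → qnorm N p ρ ≠ ⊤ := fun p hp1 hp2 =>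
    ((qnorm_le_ball h0 hK hsupp hp1 hp2).trans_lt
      (ENNReal.mul_lt_top ENNReal.ofReal_lt_top hballfin)).ne
  have hAdm : ∀ n, Adm N (v n) ρ := fun n =>
    ⟨hmeas, h0, lt_top_iff_ne_top.mpr hmassfin,
      lt_top_iff_ne_top.mpr (hqfin _ (hv n).1 (hv n).2.le), hne⟩
  have hC : ∀ n, C N (u n) (v n) ≤ Qfun N (u n) (v n) ρ := fun n =>
    sInf_le ⟨ρ, hAdm n, rfl⟩
  have hQ : Tendsto (fun n => Qfun N (u n) (v n) ρ) atTop (𝓝 (Qfun N lam q ρ)) := by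
    have hI := tendsto_I hlam hu hul hmeas hK hsupp
    have hqn := tendsto_qnorm hq0 hv hvl hmeas h0 hK hsupp
    have hal := tendsto_alpha hN hq1 hul hvl
    have hexp : Tendsto (fun n => (2 - alpha N (u n) (v n)) / v n) atTop
        (𝓝 ((2 - alpha N lam q) / q)) :=
      (tendsto_const_nhds.sub hal).div hvl hq0.ne'
    have hmpos : 0 < (mass N ρ).toReal := ENNReal.toReal_pos hmasspos.ne' hmassfin
    have hmass_rpow : ∀ t : ℝ, mass N ρ ^ t = ENNReal.ofReal ((mass N ρ).toReal ^ t) := by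
      intro t
      rw [← ENNReal.ofReal_rpow_of_pos hmpos, ENNReal.ofReal_toReal hmassfin]
    have h1 : Tendsto (fun n => mass N ρ ^ alpha N (u n) (v n)) atTop
        (𝓝 (mass N ρ ^ alpha N lam q)) := by
      simp only [hmass_rpow]
      exact ENNReal.tendsto_ofReal
        (Filter.Tendsto.rpow tendsto_const_nhds hal (Or.inl hmpos.ne'))
    have hqpos : ∀ n, 0 < qnorm N (v n) ρ := fun n => qnorm_pos' (hv n).1 hmeas h0 hne
    have hQpos : 0 < qnorm N q ρ := qnorm_pos' hq0 hmeas h0 hne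
    have hQfin : qnorm N q ρ ≠ ⊤ := hqfin q hq0 hq1.le
    have h2 : Tendsto (fun n => qnorm N (v n) ρ ^ ((2 - alpha N (u n) (v n)) / v n)) atTop
        (𝓝 (qnorm N q ρ ^ ((2 - alpha N lam q) / q))) := by
      have htR : Tendsto (fun n => (qnorm N (v n) ρ).toReal) atTop
          (𝓝 (qnorm N q ρ).toReal) := (ENNReal.tendsto_toReal hQfin).comp hqn
      have hrw : ∀ n, qnorm N (v n) ρ ^ ((2 - alpha N (u n) (v n)) / v n) =
          ENNReal.ofReal ((qnorm N (v n) ρ).toReal ^ ((2 - alpha N (u n) (v n)) / v n)) := by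
        intro n
        rw [← ENNReal.ofReal_rpow_of_pos
            (ENNReal.toReal_pos (hqpos n).ne' (hqfin _ (hv n).1 (hv n).2.le)),
          ENNReal.ofReal_toReal (hqfin _ (hv n).1 (hv n).2.le)]
      simp only [hrw]
      have hlim : Tendsto
          (fun n => (qnorm N (v n) ρ).toReal ^ ((2 - alpha N (u n) (v n)) / v n)) atTop
          (𝓝 ((qnorm N q ρ).toReal ^ ((2 - alpha N lam q) / q))) :=
        Filter.Tendsto.rpow htR hexp (Or.inl (ENNReal.toReal_pos hQpos.ne' hQfin).ne')
      have h3 := ENNReal.tendsto_ofReal hlim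
      rwa [← ENNReal.ofReal_rpow_of_pos (ENNReal.toReal_pos hQpos.ne' hQfin),
        ENNReal.ofReal_toReal hQfin] at h3
    have hdpos1 : mass N ρ ^ alpha N lam q ≠ 0 := (ENNReal.rpow_pos hmasspos hmassfin).ne'
    have hdfin1 : mass N ρ ^ alpha N lam q ≠ ⊤ := by
      simp [ENNReal.rpow_eq_top_iff, hmasspos.ne', hmassfin]
    have hdpos2 : qnorm N q ρ ^ ((2 - alpha N lam q) / q) ≠ 0 :=
      (ENNReal.rpow_pos hQpos hQfin).ne'
    have hdfin2 : qnorm N q ρ ^ ((2 - alpha N lam q) / q) ≠ ⊤ := by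
      simp [ENNReal.rpow_eq_top_iff, hQpos.ne', hQfin]
    have hden : Tendsto (fun n => denom N (u n) (v n) ρ) atTop (𝓝 (denom N lam q ρ)) := by
      simp only [denom]
      exact ENNReal.Tendsto.mul h1 (Or.inl hdpos1) h2 (Or.inl hdpos2)
    have hdne : denom N lam q ρ ≠ 0 := by
      simp only [denom]
      exact mul_ne_zero hdpos1 hdpos2
    have hdnetop : denom N lam q ρ ≠ ⊤ := by
      simp only [denom]
      exact ENNReal.mul_ne_top hdfin1 hdfin2
    simpa only [Qfun] using ENNReal.Tendsto.div hI (Or.inr hdne) hden (Or.inl hdnetop)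
  calc Filter.limsup (fun n => C N (u n) (v n)) atTop ≤
      Filter.limsup (fun n => Qfun N (u n) (v n) ρ) atTop :=
        Filter.limsup_le_limsup (Eventually.of_forall hC)
    _ = Qfun N lam q ρ := hQ.limsup_eq

end StmtAux

/-- the map `(λ, q) ↦ C_{N,λ,q}` is upper semi-continuous on
`(0,∞) × (0,1)`: along any sequence `(λ_n, q_n) → (λ, q)` in `(0,∞) × (0,1)`,
`limsup C_{N,λ_n,q_n} ≤ C_{N,λ,q}`. -/


theorem stmt18 (N : ℕ) (hN : 1 ≤ N) (lam q : ℝ) (hlam : 0 < lam)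
    (hq0 : 0 < q) (hq1 : q < 1)
    (u v : ℕ → ℝ) (hu : ∀ n, 0 < u n) (hv : ∀ n, 0 < v n ∧ v n < 1)
    (hul : Tendsto u atTop (𝓝 lam)) (hvl : Tendsto v atTop (𝓝 q)) :
    Filter.limsup (fun n => RHLS.C N (u n) (v n)) atTop ≤ RHLS.C N lam q := by
  classical
  refine le_sInf ?_
  rintro c ⟨ρ, ⟨hmeas, h0', hmassfin, hqfin, hne⟩, rfl⟩
  have h0 : ∀ x, 0 ≤ ρ x := h0'
  set σ : ℕ → RHLS.Space N → ℝ :=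
    fun k x => if ‖x‖ ≤ (k : ℝ) then min (ρ x) (k : ℝ) else 0 with hσdef
  have hσmeas : ∀ k, Measurable (σ k) := fun k =>
    Measurable.ite (measurableSet_le measurable_norm measurable_const)
      (hmeas.min measurable_const) measurable_const
  have hσ0 : ∀ k x, 0 ≤ σ k x := fun k x => by
    simp only [hσdef]
    by_cases h : ‖x‖ ≤ (k : ℝ)
    · simp only [if_pos h]
      exact le_min (h0 x) (Nat.cast_nonneg k)
    · simp only [if_neg h]
      exact le_rfl
  have hσle : ∀ k x, σ k x ≤ ρ x := fun k x => by
    simp only [hσdef]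
    by_cases h : ‖x‖ ≤ (k : ℝ)
    · simp only [if_pos h]
      exact min_le_left _ _
    · simp only [if_neg h]
      exact h0 x
  have hσmono : ∀ j k : ℕ, j ≤ k → ∀ x, σ j x ≤ σ k x := by
    intro j k hjk x
    simp only [hσdef]
    by_cases h : ‖x‖ ≤ (j : ℝ)
    · have h2 : ‖x‖ ≤ (k : ℝ) := h.trans (Nat.cast_le.mpr hjk)
      simp only [if_pos h, if_pos h2]
      exact min_le_min le_rfl (Nat.cast_le.mpr hjk)
    · simp only [if_neg h]
      by_cases h2 : ‖x‖ ≤ (k : ℝ)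
      · simp only [if_pos h2]
        exact le_min (h0 x) (Nat.cast_nonneg k)
      · simp only [if_neg h2]
        exact le_rfl
  have hσK : ∀ k x, σ k x ≤ (k : ℝ) := fun k x => by
    simp only [hσdef]
    by_cases h : ‖x‖ ≤ (k : ℝ)
    · simp only [if_pos h]
      exact min_le_right _ _
    · simp only [if_neg h]
      exact Nat.cast_nonneg k
  have hσsupp : ∀ k : ℕ, ∀ x : RHLS.Space N, (k : ℝ) < ‖x‖ → σ k x = 0 := fun k x hx => by
    simp only [hσdef, if_neg (not_le.mpr hx)]
  have hσtend : ∀ x, Tendsto (fun k => σ k x) atTop (𝓝 (ρ x)) := fun x => by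
    obtain ⟨k0, hk0⟩ := exists_nat_ge (max ‖x‖ (ρ x))
    refine tendsto_atTop_of_eventually_const (i₀ := k0) fun k hk => ?_
    have hxk : ‖x‖ ≤ (k : ℝ) :=
      le_trans (le_trans (le_max_left _ _) hk0) (Nat.cast_le.mpr hk)
    have hρk : ρ x ≤ (k : ℝ) :=
      le_trans (le_trans (le_max_right _ _) hk0) (Nat.cast_le.mpr hk)
    simp only [hσdef, if_pos hxk, min_eq_left hρk]
  -- a truncation level past which σ k is not a.e. zero
  have hk0ex : ∃ k0 : ℕ, ¬ σ k0 =ᵐ[(volume : Measure (RHLS.Space N))] 0 := by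
    have hU : {x : RHLS.Space N | ρ x ≠ 0} ⊆
        ⋃ k : ℕ, {x : RHLS.Space N | ‖x‖ ≤ (k : ℝ) ∧ ρ x ≠ 0} := by
      intro x hx
      obtain ⟨k, hk⟩ := exists_nat_ge ‖x‖
      exact Set.mem_iUnion.mpr ⟨k, hk, hx⟩
    have hpos := measure_ne_pos hne
    have hex : ∃ k : ℕ, volume {x : RHLS.Space N | ‖x‖ ≤ (k : ℝ) ∧ ρ x ≠ 0} ≠ 0 := by
      by_contra hcon
      push_neg at hcon
      have hnull := measure_iUnion_null fun k : ℕ => hcon k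
      have h2 : volume {x : RHLS.Space N | ρ x ≠ 0} ≤ 0 := (measure_mono hU).trans hnull.le
      exact hpos.ne' (le_antisymm h2 zero_le)
    obtain ⟨k, hk⟩ := hex
    refine ⟨k + 1, fun hae => ?_⟩
    rw [Filter.EventuallyEq, ae_iff] at hae
    refine hk (measure_mono_null ?_ hae)
    intro x hx
    obtain ⟨hx1, hx2⟩ := hx
    have hxk : ‖x‖ ≤ ((k + 1 : ℕ) : ℝ) := hx1.trans (by exact_mod_cast Nat.le_succ k)
    have hρpos : 0 < ρ x := lt_of_le_of_ne (h0 x) (Ne.symm hx2)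
    have hmin : 0 < min (ρ x) ((k + 1 : ℕ) : ℝ) :=
      lt_min hρpos (by exact_mod_cast Nat.succ_pos k)
    simp only [Set.mem_setOf_eq, hσdef, if_pos hxk, Pi.zero_apply]
    exact hmin.ne'
  obtain ⟨k0, hk0⟩ := hk0ex
  have hσne : ∀ k, k0 ≤ k → ¬ σ k =ᵐ[(volume : Measure (RHLS.Space N))] 0 := by
    intro k hk hae
    refine hk0 ?_
    filter_upwards [hae] with x hx
    have h1 := hσmono k0 k hk x
    have h2 := hσ0 k0 x
    simp only [Pi.zero_apply] at hx ⊢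
    linarith [hx ▸ h1]
  -- convergence of mass and qnorm of truncations
  have hmassT : Tendsto (fun k => RHLS.mass N (σ k)) atTop (𝓝 (RHLS.mass N ρ)) := by
    have hmono : Monotone fun k => (fun x => ENNReal.ofReal (σ k x)) := fun j k hjk x =>
      ENNReal.ofReal_le_ofReal (hσmono j k hjk x)
    have hmeas' : ∀ k, Measurable fun x => ENNReal.ofReal (σ k x) := fun k =>
      (hσmeas k).ennreal_ofReal
    have h1 : Monotone fun k => RHLS.mass N (σ k) := fun j k hjk =>
      lintegral_mono fun x => ENNReal.ofReal_le_ofReal (hσmono j k hjk x)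
    have h3 : ⨆ k, RHLS.mass N (σ k) = RHLS.mass N ρ := by
      simp only [RHLS.mass]
      rw [← lintegral_iSup hmeas' hmono]
      refine lintegral_congr fun x => ?_
      exact iSup_eq_of_tendsto (fun j k hjk => ENNReal.ofReal_le_ofReal (hσmono j k hjk x))
        (ENNReal.tendsto_ofReal (hσtend x))
    exact h3 ▸ tendsto_atTop_iSup h1
  have hqnormT : Tendsto (fun k => RHLS.qnorm N q (σ k)) atTop (𝓝 (RHLS.qnorm N q ρ)) := by
    have hmono : Monotone fun k => (fun x => ENNReal.ofReal (σ k x ^ q)) := fun j k hjk x =>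
      ENNReal.ofReal_le_ofReal (Real.rpow_le_rpow (hσ0 j x) (hσmono j k hjk x) hq0.le)
    have hmeas' : ∀ k, Measurable fun x => ENNReal.ofReal (σ k x ^ q) := fun k =>
      ((hσmeas k).pow measurable_const).ennreal_ofReal
    have h1 : Monotone fun k => RHLS.qnorm N q (σ k) := fun j k hjk =>
      lintegral_mono fun x =>
        ENNReal.ofReal_le_ofReal (Real.rpow_le_rpow (hσ0 j x) (hσmono j k hjk x) hq0.le)
    have h3 : ⨆ k, RHLS.qnorm N q (σ k) = RHLS.qnorm N q ρ := by
      simp only [RHLS.qnorm]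
      rw [← lintegral_iSup hmeas' hmono]
      refine lintegral_congr fun x => ?_
      refine iSup_eq_of_tendsto
        (fun j k hjk =>
          ENNReal.ofReal_le_ofReal (Real.rpow_le_rpow (hσ0 j x) (hσmono j k hjk x) hq0.le)) ?_
      refine ENNReal.tendsto_ofReal ?_
      exact ((Real.continuousAt_rpow_const (ρ x) q (Or.inr hq0.le)).tendsto).comp (hσtend x)
    exact h3 ▸ tendsto_atTop_iSup h1
  -- convergence of the denominators of truncations
  have hmasspos := mass_pos' hmeas h0 hne
  have hQpos := qnorm_pos' hq0 hmeas h0 hne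
  have hmassne : RHLS.mass N ρ ≠ ⊤ := hmassfin.ne
  have hQne : RHLS.qnorm N q ρ ≠ ⊤ := hqfin.ne
  have hdpos1 : RHLS.mass N ρ ^ RHLS.alpha N lam q ≠ 0 :=
    (ENNReal.rpow_pos hmasspos hmassne).ne'
  have hdfin1 : RHLS.mass N ρ ^ RHLS.alpha N lam q ≠ ⊤ := by
    simp [ENNReal.rpow_eq_top_iff, hmasspos.ne', hmassne]
  have hdpos2 : RHLS.qnorm N q ρ ^ ((2 - RHLS.alpha N lam q) / q) ≠ 0 :=
    (ENNReal.rpow_pos hQpos hQne).ne'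
  have hdfin2 : RHLS.qnorm N q ρ ^ ((2 - RHLS.alpha N lam q) / q) ≠ ⊤ := by
    simp [ENNReal.rpow_eq_top_iff, hQpos.ne', hQne]
  have hdenT : Tendsto (fun k => RHLS.denom N lam q (σ k)) atTop
      (𝓝 (RHLS.denom N lam q ρ)) := by
    simp only [RHLS.denom]
    exact ENNReal.Tendsto.mul (hmassT.ennrpow_const _) (Or.inl hdpos1)
      (hqnormT.ennrpow_const _) (Or.inl hdpos2)
  have hdnetop : RHLS.denom N lam q ρ ≠ ⊤ := by
    simp only [RHLS.denom]
    exact ENNReal.mul_ne_top hdfin1 hdfin2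
  have hIle : ∀ k, RHLS.I N lam (σ k) ≤ RHLS.I N lam ρ := fun k => by
    refine lintegral_mono fun x => lintegral_mono fun y => ?_
    exact mul_le_mul' (mul_le_mul' (ENNReal.ofReal_le_ofReal (hσle k x)) le_rfl)
      (ENNReal.ofReal_le_ofReal (hσle k y))
  have hlim : Tendsto (fun k => RHLS.I N lam ρ / RHLS.denom N lam q (σ k)) atTop
      (𝓝 (RHLS.Qfun N lam q ρ)) :=
    ENNReal.Tendsto.const_div hdenT (Or.inl hdnetop)
  refine ge_of_tendsto hlim ?_
  filter_upwards [Filter.eventually_ge_atTop k0] with k hk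
  calc Filter.limsup (fun n => RHLS.C N (u n) (v n)) atTop ≤ RHLS.Qfun N lam q (σ k) :=
      limsup_le_Q hN hlam hq0 hq1 hu hv hul hvl (hσmeas k) (hσ0 k) (hσK k) (hσsupp k)
        (hσne k hk)
    _ ≤ RHLS.I N lam ρ / RHLS.denom N lam q (σ k) := by
      rw [RHLS.Qfun]
      exact ENNReal.div_le_div_right (hIle k) _
end
end

section
/- Let N ≥ 1 be an integer and λ > 0, and let ρ ≥ 0 be a measurable radially symmetric non-increasing function on ℝ^N. Then for every x ∈ ℝ^N one has ∫_{ℝ^N} |x−y|^λ ρ(y) dy ≥ ∫_{ℝ^N} |y|^λ ρ(y) dy, and consequently I_λ[ρ] ≥ (∫_{ℝ^N} |y|^λ ρ(y) dy) (∫_{ℝ^N} ρ(x) dx). -/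
open MeasureTheory ENNReal Filter Topology

noncomputable section

/-- for a radially symmetric non-increasing `ρ ≥ 0` one has
`∫ |x-y|^λ ρ(y) dy ≥ ∫ |y|^λ ρ(y) dy` for every `x`, and consequently
`I_λ[ρ] ≥ (∫|y|^λ ρ(y) dy)(∫ρ dx)`. -/
theorem stmt19 (N : ℕ) (hN : 1 ≤ N) (lam : ℝ) (hlam : 0 < lam)
    (ρ : RHLS.Space N → ℝ) (hm : Measurable ρ) (h0 : 0 ≤ ρ)
    (hrad : RHLS.RadialNonincreasing N ρ) :
    (∀ x : RHLS.Space N,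
      (∫⁻ y, ENNReal.ofReal (‖y‖ ^ lam) * ENNReal.ofReal (ρ y)) ≤
        ∫⁻ y, ENNReal.ofReal (‖x - y‖ ^ lam) * ENNReal.ofReal (ρ y)) ∧
    RHLS.mom N lam ρ * RHLS.mass N ρ ≤ RHLS.I N lam ρ := by
  obtain ⟨φ, hφ, hρφ⟩ := hrad
  -- rearrangement lemma in ℝ≥0∞
  have rearr : ∀ a b p q : ℝ≥0∞, a ≤ b → q ≤ p → a * p + b * q ≤ b * p + a * q := by
    intro a b p q hab hqp
    calc a * p + b * q = a * p + ((b - a) + a) * q := by rw [tsub_add_cancel_of_le hab]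
      _ = a * p + ((b - a) * q + a * q) := by rw [add_mul]
      _ ≤ a * p + ((b - a) * p + a * q) := by gcongr
      _ = (a + (b - a)) * p + a * q := by rw [add_mul]; ring
      _ = b * p + a * q := by rw [add_tsub_cancel_of_le hab]
  have key : ∀ x : RHLS.Space N,
      (∫⁻ y, ENNReal.ofReal (‖y‖ ^ lam) * ENNReal.ofReal (ρ y)) ≤
        ∫⁻ y, ENNReal.ofReal (‖x - y‖ ^ lam) * ENNReal.ofReal (ρ y) := by
    intro x
    set f : RHLS.Space N → ℝ≥0∞ :=
      fun y => ENNReal.ofReal (‖x - y‖ ^ lam) * ENNReal.ofReal (ρ y) with hf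
    set g : RHLS.Space N → ℝ≥0∞ :=
      fun y => ENNReal.ofReal (‖y‖ ^ lam) * ENNReal.ofReal (ρ y) with hg
    have hmf : Measurable f := by
      apply Measurable.mul (f := fun y => ENNReal.ofReal (‖x - y‖ ^ lam)) (g := fun y => ENNReal.ofReal (ρ y))
      · exact ((measurable_const.sub measurable_id).norm.pow_const lam).ennreal_ofReal
      · exact hm.ennreal_ofReal
    have hmg : Measurable g := by
      apply Measurable.mul (f := fun y => ENNReal.ofReal (‖y‖ ^ lam)) (g := fun y => ENNReal.ofReal (ρ y))
      · exact (measurable_id.norm.pow_const lam).ennreal_ofReal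
      · exact hm.ennreal_ofReal
    set H : Set (RHLS.Space N) := {y | ‖y‖ ≤ ‖x - y‖} with hHdef
    have hH : MeasurableSet H :=
      measurableSet_le measurable_id.norm (measurable_const.sub measurable_id).norm
    set H' : Set (RHLS.Space N) := {y | ‖y‖ < ‖x - y‖} with hH'def
    have hT : MeasureTheory.MeasurePreserving (fun y : RHLS.Space N => x - y) volume volume :=
      MeasureTheory.Measure.measurePreserving_sub_left volume x
    -- change of variables for the complement part
    have hco : ∀ F : RHLS.Space N → ℝ≥0∞, Measurable F →
        ∫⁻ y in Hᶜ, F y = ∫⁻ y, H'.indicator (fun z => F (x - z)) y := by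
      intro F hF
      rw [← lintegral_indicator hH.compl]
      rw [← hT.lintegral_comp (hF.indicator hH.compl)]
      congr 1
      funext y
      have hmem : (x - y ∈ Hᶜ) ↔ (y ∈ H') := by
        have hxy : x - (x - y) = y := by abel
        simp only [hHdef, hH'def, Set.mem_compl_iff, Set.mem_setOf_eq, not_le, hxy]
      by_cases hy : y ∈ H'
      · rw [Set.indicator_of_mem (hmem.mpr hy), Set.indicator_of_mem hy]
      · rw [Set.indicator_of_notMem (fun h => hy (hmem.mp h)),
          Set.indicator_of_notMem hy]
    have hgsplit : ∫⁻ y, g y =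
        ∫⁻ y, (H.indicator g y + H'.indicator (fun z => g (x - z)) y) := by
      rw [lintegral_add_left (hmg.indicator hH), lintegral_indicator hH,
        ← hco g hmg, lintegral_add_compl g hH]
    have hfsplit : ∫⁻ y, f y =
        ∫⁻ y, (H.indicator f y + H'.indicator (fun z => f (x - z)) y) := by
      rw [lintegral_add_left (hmf.indicator hH), lintegral_indicator hH,
        ← hco f hmf, lintegral_add_compl f hH]
    rw [hgsplit, hfsplit]
    apply lintegral_mono
    intro y
    dsimp only
    by_cases hy' : y ∈ H'
    · have hlt : ‖y‖ < ‖x - y‖ := hy'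
      have hy : y ∈ H := le_of_lt hlt
      rw [Set.indicator_of_mem hy', Set.indicator_of_mem hy',
        Set.indicator_of_mem hy, Set.indicator_of_mem hy]
      have hnorm : ‖y‖ ≤ ‖x - y‖ := le_of_lt hy'
      have hab : ENNReal.ofReal (‖y‖ ^ lam) ≤ ENNReal.ofReal (‖x - y‖ ^ lam) :=
        ENNReal.ofReal_le_ofReal (Real.rpow_le_rpow (norm_nonneg _) hnorm hlam.le)
      have hqp : ENNReal.ofReal (ρ (x - y)) ≤ ENNReal.ofReal (ρ y) := by
        apply ENNReal.ofReal_le_ofReal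
        rw [hρφ, hρφ]
        exact hφ ‖y‖ ‖x - y‖ (norm_nonneg _) hnorm
      have := rearr (ENNReal.ofReal (‖y‖ ^ lam)) (ENNReal.ofReal (‖x - y‖ ^ lam))
        (ENNReal.ofReal (ρ y)) (ENNReal.ofReal (ρ (x - y))) hab hqp
      have hxy : x - (x - y) = y := by abel
      simp only [hf, hg]
      rw [hxy]
      exact this
    · rw [Set.indicator_of_notMem hy', Set.indicator_of_notMem hy']
      by_cases hy : y ∈ H
      · rw [Set.indicator_of_mem hy, Set.indicator_of_mem hy]
        have heq : ‖y‖ = ‖x - y‖ := le_antisymm hy (not_lt.mp hy')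
        simp only [hf, hg, heq, le_refl, add_zero]
      · rw [Set.indicator_of_notMem hy, Set.indicator_of_notMem hy]
  refine ⟨key, ?_⟩
  -- second part
  have hmom : RHLS.mom N lam ρ = ∫⁻ y, ENNReal.ofReal (‖y‖ ^ lam) * ENNReal.ofReal (ρ y) := by
    unfold RHLS.mom
    congr 1
    funext y
    rw [ENNReal.ofReal_mul (Real.rpow_nonneg (norm_nonneg _) lam)]
  have hmfx : ∀ x : RHLS.Space N,
      Measurable (fun y => ENNReal.ofReal (‖x - y‖ ^ lam) * ENNReal.ofReal (ρ y)) := by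
    intro x
    exact (((measurable_const.sub measurable_id).norm.pow_const lam).ennreal_ofReal).mul
      hm.ennreal_ofReal
  unfold RHLS.I RHLS.mass
  calc RHLS.mom N lam ρ * (∫⁻ x, ENNReal.ofReal (ρ x))
      = ∫⁻ x, ENNReal.ofReal (ρ x) * RHLS.mom N lam ρ := by
        rw [lintegral_mul_const _ hm.ennreal_ofReal, mul_comm]
    _ ≤ ∫⁻ x, ∫⁻ y, ENNReal.ofReal (ρ x) * ENNReal.ofReal (‖x - y‖ ^ lam) *
          ENNReal.ofReal (ρ y) := by
        apply lintegral_mono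
        intro x
        calc ENNReal.ofReal (ρ x) * RHLS.mom N lam ρ
            ≤ ENNReal.ofReal (ρ x) *
              ∫⁻ y, ENNReal.ofReal (‖x - y‖ ^ lam) * ENNReal.ofReal (ρ y) := by
              rw [hmom]; exact mul_le_mul_right (key x) _
          _ = ∫⁻ y, ENNReal.ofReal (ρ x) * ENNReal.ofReal (‖x - y‖ ^ lam) *
              ENNReal.ofReal (ρ y) := by
              rw [← lintegral_const_mul _ (hmfx x)]
              simp only [mul_assoc]
end
end
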